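/- arXiv:2412.10024 — 7 statements merged into one kernel-verified Lean document; each statement's English description precedes it below -/
import Mathlib

section
/- Consider the single-player test-allocation problem with K = 2 attributes, prior variances Σ⁰₁, Σ⁰₂ > 0, budget T > 0, and weights α₁, α₂ ≥ 0 with (α₁, α₂) ≠ (0,0) and α₁Σ⁰₁ ≥ α₂Σ⁰₂ (so α₁ > 0). Then the function σ̂²(τ) := α₁²Σ⁰₁/(1+τ₁Σ⁰₁) + α₂²Σ⁰₂/(1+τ₂Σ⁰₂) has a unique minimizer τ* over 𝒯, given as follows: if α₂ = 0 then τ* = (T, 0); if α₂ > 0 then, setting T̄ := α₁/(α₂Σ⁰₂) − 1/Σ⁰₁, one has τ*₁ = T when T ≤ T̄ and τ*₁ = T̄ + (α₁/(α₁+α₂))(T − T̄) when T > T̄, with τ*₂ = T − τ*₁ in both cases. -/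
noncomputable section

namespace Stmt0Aux

lemma den_pos {S t : ℝ} (hS : 0 < S) (ht : 0 ≤ t) : 0 < 1 + t * S := by
  nlinarith

lemma decomp (a S s t : ℝ) (hS : 0 < S) (hs : 0 ≤ s) (ht : 0 ≤ t) :
    a^2 * (S / (1 + t*S)) =
      a^2 * (S / (1 + s*S)) - a^2*S^2/(1+s*S)^2 * (t-s)
        + a^2*S^3*(t-s)^2/((1+t*S)*(1+s*S)^2) := by
  have h1 := den_pos hS ht
  have h2 := den_pos hS hs
  field_simp
  ring

lemma rem_nonneg (a S s t : ℝ) (hS : 0 < S) (hs : 0 ≤ s) (ht : 0 ≤ t) :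
    0 ≤ a^2*S^3*(t-s)^2/((1+t*S)*(1+s*S)^2) := by
  have h1 := den_pos hS ht
  have h2 := den_pos hS hs
  positivity

lemma rem_eq_zero (a S s t : ℝ) (hS : 0 < S) (hs : 0 ≤ s) (ht : 0 ≤ t)
    (h : a^2*S^3*(t-s)^2/((1+t*S)*(1+s*S)^2) = 0) : a = 0 ∨ t = s := by
  have h1 := den_pos hS ht
  have h2 := den_pos hS hs
  have hd : (1+t*S)*(1+s*S)^2 ≠ 0 := by positivity
  rw [div_eq_zero_iff] at h
  rcases h with h | h
  · have : a^2 * (t-s)^2 = 0 := by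
      have hS3 : S^3 ≠ 0 := by positivity
      nlinarith [sq_nonneg (a*(t-s)), sq_nonneg a, sq_nonneg (t-s), pow_pos hS 3]
    rcases mul_eq_zero.1 this with h' | h'
    · exact Or.inl (pow_eq_zero_iff two_ne_zero |>.1 h')
    · exact Or.inr (by nlinarith [sq_nonneg (t-s)])
  · exact absurd h hd

lemma master (S1 S2 a1 a2 s1 s2 t1 t2 : ℝ)
    (hS1 : 0 < S1) (hS2 : 0 < S2)
    (hs1 : 0 ≤ s1) (hs2 : 0 ≤ s2) (ht1 : 0 ≤ t1) (ht2 : 0 ≤ t2)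
    (hkkt : a1^2*S1^2/(1+s1*S1)^2 * (t1-s1) + a2^2*S2^2/(1+s2*S2)^2 * (t2-s2) ≤ 0) :
    a1^2 * (S1/(1+s1*S1)) + a2^2 * (S2/(1+s2*S2))
      ≤ a1^2 * (S1/(1+t1*S1)) + a2^2 * (S2/(1+t2*S2)) := by
  have d1 := decomp a1 S1 s1 t1 hS1 hs1 ht1
  have d2 := decomp a2 S2 s2 t2 hS2 hs2 ht2
  have r1 := rem_nonneg a1 S1 s1 t1 hS1 hs1 ht1
  have r2 := rem_nonneg a2 S2 s2 t2 hS2 hs2 ht2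
  rw [d1, d2]; linarith

lemma master_eq (S1 S2 a1 a2 s1 s2 t1 t2 : ℝ)
    (hS1 : 0 < S1) (hS2 : 0 < S2)
    (hs1 : 0 ≤ s1) (hs2 : 0 ≤ s2) (ht1 : 0 ≤ t1) (ht2 : 0 ≤ t2)
    (hkkt : a1^2*S1^2/(1+s1*S1)^2 * (t1-s1) + a2^2*S2^2/(1+s2*S2)^2 * (t2-s2) ≤ 0)
    (heq : a1^2 * (S1/(1+t1*S1)) + a2^2 * (S2/(1+t2*S2))
      = a1^2 * (S1/(1+s1*S1)) + a2^2 * (S2/(1+s2*S2))) :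
    (a1 = 0 ∨ t1 = s1) ∧ (a2 = 0 ∨ t2 = s2) := by
  have d1 := decomp a1 S1 s1 t1 hS1 hs1 ht1
  have d2 := decomp a2 S2 s2 t2 hS2 hs2 ht2
  have r1 := rem_nonneg a1 S1 s1 t1 hS1 hs1 ht1
  have r2 := rem_nonneg a2 S2 s2 t2 hS2 hs2 ht2
  have hz1 : a1^2*S1^3*(t1-s1)^2/((1+t1*S1)*(1+s1*S1)^2) = 0 := by
    rw [d1, d2] at heq; linarith
  have hz2 : a2^2*S2^3*(t2-s2)^2/((1+t2*S2)*(1+s2*S2)^2) = 0 := by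
    rw [d1, d2] at heq; linarith
  exact ⟨rem_eq_zero a1 S1 s1 t1 hS1 hs1 ht1 hz1,
         rem_eq_zero a2 S2 s2 t2 hS2 hs2 ht2 hz2⟩

end Stmt0Aux

open Stmt0Aux in
/-- Single-player case with K = 2 (Theorem 1 of the paper).
`S1, S2` are the prior variances `Σ⁰₁, Σ⁰₂`; `a1, a2` are the weights `α₁, α₂`.
The unique minimizer of `σ̂²` over the set of test allocations `𝒯` is given
explicitly. -/
theorem stmt_0
    (S1 S2 T a1 a2 : ℝ)
    (hS1 : 0 < S1) (hS2 : 0 < S2) (hT : 0 < T)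
    (ha1 : 0 ≤ a1) (ha2 : 0 ≤ a2)
    (hne : ¬ (a1 = 0 ∧ a2 = 0))
    (hsort : a2 * S2 ≤ a1 * S1) :
    let 𝒯 : Set (ℝ × ℝ) := {τ | 0 ≤ τ.1 ∧ 0 ≤ τ.2 ∧ τ.1 + τ.2 ≤ T}
    let σhat2 : ℝ × ℝ → ℝ := fun τ =>
      a1 ^ 2 * (S1 / (1 + τ.1 * S1)) + a2 ^ 2 * (S2 / (1 + τ.2 * S2))
    let Tbar : ℝ := a1 / (a2 * S2) - 1 / S1
    let τ1 : ℝ :=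
      if a2 = 0 then T
      else if T ≤ Tbar then T else Tbar + (a1 / (a1 + a2)) * (T - Tbar)
    let τstar : ℝ × ℝ := (τ1, T - τ1)
    τstar ∈ 𝒯 ∧ (∀ τ ∈ 𝒯, σhat2 τstar ≤ σhat2 τ) ∧
      (∀ τ ∈ 𝒯, σhat2 τ = σhat2 τstar → τ = τstar) := by
  intro 𝒯 σhat2 Tbar τ1 τstar
  have ha1pos : 0 < a1 := by
    rcases ha1.lt_or_eq with h | h
    · exact h
    · exfalso; exact hne ⟨h.symm, by nlinarith⟩
  have ha1ne : a1 ≠ 0 := ha1pos.ne'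
  by_cases h2 : a2 = 0
  · -- case a2 = 0
    have hτ1 : τ1 = T := by simp only [τ1, if_pos h2]
    have hkkt : ∀ t1 t2 : ℝ, 0 ≤ t1 → 0 ≤ t2 → t1 + t2 ≤ T →
        a1^2*S1^2/(1+T*S1)^2 * (t1-T) + a2^2*S2^2/(1+0*S2)^2 * (t2-0) ≤ 0 := by
      intro t1 t2 ht1 ht2 htT
      have hc1 : 0 ≤ a1^2*S1^2/(1+T*S1)^2 := div_nonneg (by positivity) (sq_nonneg _)
      have hB : a2^2*S2^2/(1+0*S2)^2 * (t2-0) = 0 := by rw [h2]; norm_num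
      linarith [mul_nonneg hc1 (by linarith : (0:ℝ) ≤ T - t1), hB]
    refine ⟨⟨by simp only [τstar, hτ1]; exact hT.le,
            by simp only [τstar, hτ1]; linarith,
            by simp only [τstar, hτ1]; linarith⟩, ?_, ?_⟩
    · rintro ⟨t1, t2⟩ ⟨ht1, ht2, htT⟩
      simp only [σhat2, τstar, hτ1, sub_self]
      exact master S1 S2 a1 a2 T 0 t1 t2 hS1 hS2 hT.le le_rfl ht1 ht2
        (hkkt t1 t2 ht1 ht2 htT)
    · rintro ⟨t1, t2⟩ ⟨ht1, ht2, htT⟩ heq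
      simp only [σhat2, τstar, hτ1, sub_self] at heq
      obtain ⟨h1', _⟩ := master_eq S1 S2 a1 a2 T 0 t1 t2 hS1 hS2 hT.le le_rfl ht1 ht2
        (hkkt t1 t2 ht1 ht2 htT) heq
      have ht1T : t1 = T := h1'.resolve_left ha1ne
      have ht20 : t2 = 0 := by linarith
      simp only [τstar, hτ1, Prod.mk.injEq]
      exact ⟨ht1T, by linarith⟩
  · -- case a2 > 0
    have ha2pos : 0 < a2 := lt_of_le_of_ne ha2 (Ne.symm h2)
    have ha2' : a2 ≠ 0 := h2
    have hS1' : S1 ≠ 0 := hS1.ne'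
    have hS2' : S2 ≠ 0 := hS2.ne'
    have hTbar : Tbar * (a2*S1*S2) = a1*S1 - a2*S2 := by
      simp only [Tbar]; field_simp
    by_cases hTle : T ≤ Tbar
    · -- boundary case: τ1 = T
      have hτ1 : τ1 = T := by simp only [τ1, if_neg h2, if_pos hTle]
      have hP : 0 < 1 + T*S1 := den_pos hS1 hT.le
      have key : a2*S2*(1+T*S1) ≤ a1*S1 := by
        have := mul_le_mul_of_nonneg_right hTle (by positivity : (0:ℝ) ≤ a2*S1*S2)
        nlinarith
      have hcc : a2^2*S2^2/(1+0*S2)^2 ≤ a1^2*S1^2/(1+T*S1)^2 := by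
        rw [show (1:ℝ)+0*S2 = 1 by ring, div_le_div_iff₀ (by norm_num) (pow_pos hP 2)]
        nlinarith [mul_nonneg (mul_nonneg ha2 hS2.le) hP.le]
      have hc2 : 0 ≤ a2^2*S2^2/(1+0*S2)^2 := div_nonneg (by positivity) (sq_nonneg _)
      have hkkt : ∀ t1 t2 : ℝ, 0 ≤ t1 → 0 ≤ t2 → t1 + t2 ≤ T →
          a1^2*S1^2/(1+T*S1)^2 * (t1-T) + a2^2*S2^2/(1+0*S2)^2 * (t2-0) ≤ 0 := by
        intro t1 t2 ht1 ht2 htT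
        nlinarith [mul_nonneg (sub_nonneg.2 hcc) (by linarith : (0:ℝ) ≤ T - t1),
                   mul_nonneg hc2 (by linarith : (0:ℝ) ≤ T - t1 - t2)]
      refine ⟨⟨by simp only [τstar, hτ1]; exact hT.le,
              by simp only [τstar, hτ1]; linarith,
              by simp only [τstar, hτ1]; linarith⟩, ?_, ?_⟩
      · rintro ⟨t1, t2⟩ ⟨ht1, ht2, htT⟩
        simp only [σhat2, τstar, hτ1, sub_self]
        exact master S1 S2 a1 a2 T 0 t1 t2 hS1 hS2 hT.le le_rfl ht1 ht2
          (hkkt t1 t2 ht1 ht2 htT)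
      · rintro ⟨t1, t2⟩ ⟨ht1, ht2, htT⟩ heq
        simp only [σhat2, τstar, hτ1, sub_self] at heq
        obtain ⟨h1', h2'⟩ := master_eq S1 S2 a1 a2 T 0 t1 t2 hS1 hS2 hT.le le_rfl ht1 ht2
          (hkkt t1 t2 ht1 ht2 htT) heq
        have ht1T : t1 = T := h1'.resolve_left ha1ne
        have ht20 : t2 = 0 := h2'.resolve_left h2
        simp only [τstar, hτ1, Prod.mk.injEq]
        exact ⟨ht1T, by linarith⟩
    · -- interior case
      have hTgt : Tbar < T := lt_of_not_ge hTle
      have hA : 0 < (a1+a2)*S1*S2 := by positivity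
      have hτ1e : τ1 = (a1*S1 - a2*S2 + a1*S1*S2*T)/((a1+a2)*S1*S2) := by
        simp only [τ1, if_neg h2, if_neg hTle, Tbar]
        have h12 : a1 + a2 ≠ 0 := by positivity
        field_simp
        ring
      have hs1 : 0 ≤ τ1 := by
        rw [hτ1e]
        apply div_nonneg _ hA.le
        nlinarith [mul_pos (mul_pos (mul_pos ha1pos hS1) hS2) hT, hsort]
      have hs2 : 0 ≤ T - τ1 := by
        rw [hτ1e, sub_nonneg, div_le_iff₀ hA]
        have := mul_lt_mul_of_pos_right hTgt (by positivity : (0:ℝ) < a2*S1*S2)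
        nlinarith
      have hd1 : 0 < 1 + τ1*S1 := den_pos hS1 hs1
      have hd2 : 0 < 1 + (T-τ1)*S2 := den_pos hS2 hs2
      have hfoc : a1*S1*(1+(T-τ1)*S2) = a2*S2*(1+τ1*S1) := by
        rw [hτ1e]
        have h12 : a1 + a2 ≠ 0 := by positivity
        field_simp
        ring
      have hcc : a1^2*S1^2/(1+τ1*S1)^2 = a2^2*S2^2/(1+(T-τ1)*S2)^2 := by
        have hratio : a1*S1/(1+τ1*S1) = a2*S2/(1+(T-τ1)*S2) := by
          rw [div_eq_div_iff hd1.ne' hd2.ne']; linarith [hfoc]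
        have := congrArg (fun x : ℝ => x^2) hratio
        simp only [div_pow, mul_pow] at this
        exact this
      have hc1 : 0 ≤ a1^2*S1^2/(1+τ1*S1)^2 := div_nonneg (by positivity) (sq_nonneg _)
      have hkkt : ∀ t1 t2 : ℝ, 0 ≤ t1 → 0 ≤ t2 → t1 + t2 ≤ T →
          a1^2*S1^2/(1+τ1*S1)^2 * (t1-τ1) + a2^2*S2^2/(1+(T-τ1)*S2)^2 * (t2-(T-τ1)) ≤ 0 := by
        intro t1 t2 ht1 ht2 htT
        rw [← hcc]
        nlinarith [mul_nonneg hc1 (by linarith : (0:ℝ) ≤ T - t1 - t2)]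
      refine ⟨⟨hs1, hs2, by simp only [τstar]; linarith⟩, ?_, ?_⟩
      · rintro ⟨t1, t2⟩ ⟨ht1, ht2, htT⟩
        simp only [σhat2, τstar]
        exact master S1 S2 a1 a2 τ1 (T-τ1) t1 t2 hS1 hS2 hs1 hs2 ht1 ht2
          (hkkt t1 t2 ht1 ht2 htT)
      · rintro ⟨t1, t2⟩ ⟨ht1, ht2, htT⟩ heq
        simp only [σhat2, τstar] at heq
        obtain ⟨h1', h2'⟩ := master_eq S1 S2 a1 a2 τ1 (T-τ1) t1 t2 hS1 hS2 hs1 hs2 ht1 ht2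
          (hkkt t1 t2 ht1 ht2 htT) heq
        simp only [τstar, Prod.mk.injEq]
        exact ⟨h1'.resolve_left ha1ne, h2'.resolve_left h2⟩
end
end

section
/- Consider the single-player test-allocation problem with K ≥ 2 attributes, prior variances Σ⁰_k > 0, budget T > 0, and weights α_k ≥ 0 sorted so that α₁Σ⁰₁ ≥ α₂Σ⁰₂ ≥ … ≥ α_KΣ⁰_K, with α₁ > 0. Define thresholds T̄_k := (Σ_{l=1}^{k−1} α_l)/(α_k Σ⁰_k) − Σ_{l=1}^{k−1} 1/Σ⁰_l for k with α_k > 0, T̄_k := +∞ for k with α_k = 0, and T̄_{K+1} := +∞. Then 0 = T̄₁ ≤ T̄₂ ≤ … ≤ T̄_{K+1}, there is a unique J ∈ {1, …, K} with T̄_J ≤ T < T̄_{J+1}, and the unique minimizer τ* of σ̂²(τ) := Σ_k α_k² Σ⁰_k/(1+τ_kΣ⁰_k) over 𝒯 is given by τ*_k = (T − T̄_J)·α_k/(Σ_{l=1}^{J} α_l) + Σ_{j=k}^{J−1} (T̄_{j+1} − T̄_j)·α_k/(Σ_{l=1}^{j} α_l) for all k ∈ {1,…,J}, and τ*_k = 0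 for all k ∈ {J+1,…,K}. -/
noncomputable section
open Finset

lemma key_ge (b S s t lam : ℝ) (hS : 0 < S) (hs : 0 ≤ s) (ht : 0 ≤ t)
    (hle : b ^ 2 * S ^ 2 ≤ lam ^ 2 * (1 + s * S) ^ 2)
    (heq : s = 0 ∨ b ^ 2 * S ^ 2 = lam ^ 2 * (1 + s * S) ^ 2) :
    0 ≤ b ^ 2 * (S / (1 + t * S)) - b ^ 2 * (S / (1 + s * S)) + lam ^ 2 * (t - s) := by
  have hu : (0:ℝ) < 1 + t * S := by nlinarith
  have hv : (0:ℝ) < 1 + s * S := by nlinarith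
  have hid : b ^ 2 * (S / (1 + t * S)) - b ^ 2 * (S / (1 + s * S)) + lam ^ 2 * (t - s)
      = ((t - s) * (lam ^ 2 * (1 + t * S) * (1 + s * S) - b ^ 2 * S ^ 2)) /
        ((1 + t * S) * (1 + s * S)) := by
    field_simp
    ring
  rw [hid]
  apply div_nonneg _ (by positivity)
  rcases heq with h | h
  · subst h
    nlinarith [mul_nonneg ht (sub_nonneg.2 hle),
      mul_nonneg (mul_nonneg (sq_nonneg lam) hS.le) (sq_nonneg t)]
  · have h2 : lam ^ 2 * (1 + t * S) * (1 + s * S) - b ^ 2 * S ^ 2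
        = lam ^ 2 * (1 + s * S) * (S * (t - s)) := by linear_combination -h
    rw [h2]
    nlinarith [mul_nonneg (mul_nonneg (mul_nonneg (sq_nonneg lam) hv.le) hS.le) (sq_nonneg (t - s))]

lemma key_eq_active (b S s t lam : ℝ) (hS : 0 < S) (hs : 0 ≤ s) (ht : 0 ≤ t)
    (hb : 0 < b) (heq : b ^ 2 * S ^ 2 = lam ^ 2 * (1 + s * S) ^ 2)
    (h0 : b ^ 2 * (S / (1 + t * S)) - b ^ 2 * (S / (1 + s * S)) + lam ^ 2 * (t - s) = 0) :
    t = s := by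
  have hu : (0:ℝ) < 1 + t * S := by nlinarith
  have hv : (0:ℝ) < 1 + s * S := by nlinarith
  have hid : b ^ 2 * (S / (1 + t * S)) - b ^ 2 * (S / (1 + s * S)) + lam ^ 2 * (t - s)
      = ((t - s) * (lam ^ 2 * (1 + t * S) * (1 + s * S) - b ^ 2 * S ^ 2)) /
        ((1 + t * S) * (1 + s * S)) := by
    field_simp
    ring
  rw [hid] at h0
  have hnum : (t - s) * (lam ^ 2 * (1 + t * S) * (1 + s * S) - b ^ 2 * S ^ 2) = 0 := by
    rcases div_eq_zero_iff.mp h0 with h | h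
    · exact h
    · exact absurd h (by positivity)
  have hbS : (0:ℝ) < b ^ 2 * S ^ 2 := by positivity
  have hlam2 : 0 < lam ^ 2 := by
    rw [heq] at hbS
    rcases mul_pos_iff.mp hbS with ⟨h, _⟩ | ⟨h, _⟩
    · exact h
    · exact absurd h (not_lt.mpr (sq_nonneg lam))
  have hkey : lam ^ 2 * (1 + s * S) * S * (t - s) ^ 2 = 0 := by
    linear_combination hnum + (t - s) * heq
  by_contra hne
  have h2 : 0 < (t - s) ^ 2 :=
    lt_of_le_of_ne (sq_nonneg _) (Ne.symm (pow_ne_zero 2 (sub_ne_zero.mpr hne)))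
  nlinarith [mul_pos (mul_pos (mul_pos hlam2 hv) hS) h2]

lemma key_eq_inactive (b S t lam : ℝ) (hS : 0 < S) (ht : 0 ≤ t)
    (hlt : b ^ 2 * S ^ 2 < lam ^ 2)
    (h0 : b ^ 2 * (S / (1 + t * S)) - b ^ 2 * (S / (1 + 0 * S)) + lam ^ 2 * (t - 0) = 0) :
    t = 0 := by
  have hu : (0:ℝ) < 1 + t * S := by nlinarith
  have hid : b ^ 2 * (S / (1 + t * S)) - b ^ 2 * (S / (1 + 0 * S)) + lam ^ 2 * (t - 0)
      = (t * (lam ^ 2 * (1 + t * S) - b ^ 2 * S ^ 2)) / (1 + t * S) := by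
    field_simp
    ring
  rw [hid] at h0
  have hnum : t * (lam ^ 2 * (1 + t * S) - b ^ 2 * S ^ 2) = 0 := by
    rcases div_eq_zero_iff.mp h0 with h | h
    · exact h
    · exact absurd h hu.ne'
  by_contra hne
  have htpos : 0 < t := lt_of_le_of_ne ht (Ne.symm hne)
  have hfac : 0 < lam ^ 2 * (1 + t * S) - b ^ 2 * S ^ 2 := by
    nlinarith [mul_nonneg (sq_nonneg lam) (mul_nonneg ht hS.le)]
  nlinarith [mul_pos htpos hfac]

set_option maxHeartbeats 1000000 in
/-- Single-player case with general `K ≥ 2` (Theorem 3 of the paper).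
Attributes are indexed (0-based) by `k ∈ {0, …, K-1}`; `S0 k` is the prior variance
`Σ⁰_k` and `a k` is the weight `α_k`.  Test allocations are functions `ℕ → ℝ`
that vanish from index `K` onwards.  `Tbar k` (valued in `EReal`, with `⊤` for
`α_k = 0` and for `k = K`, i.e. the (K+1)-st threshold) are the budget thresholds,
and `TbarR` their real values.  The thresholds are sorted starting from `0`, there
is a unique `J` with `T ∈ [T̄_J, T̄_{J+1})`, and the unique minimizer of `σ̂²` over
`𝒯` is given by the explicit formula. -/
theorem stmt_1
    (K : ℕ) (hK : 2 ≤ K)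
    (S0 a : ℕ → ℝ) (T : ℝ)
    (hS : ∀ k < K, 0 < S0 k)
    (ha : ∀ k < K, 0 ≤ a k)
    (hT : 0 < T)
    (hsort : ∀ k, k + 1 < K → a (k + 1) * S0 (k + 1) ≤ a k * S0 k)
    (ha0 : 0 < a 0) :
    let 𝒯 : Set (ℕ → ℝ) := {τ | (∀ k < K, 0 ≤ τ k) ∧ (∀ k, K ≤ k → τ k = 0) ∧
      ∑ k ∈ range K, τ k ≤ T}
    let σhat2 : (ℕ → ℝ) → ℝ := fun τ => ∑ k ∈ range K, a k ^ 2 * (S0 k / (1 + τ k * S0 k))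
    let TbarR : ℕ → ℝ := fun k => (∑ l ∈ range k, a l) / (a k * S0 k) - ∑ l ∈ range k, 1 / S0 l
    let Tbar : ℕ → EReal := fun k =>
      if k < K then (if a k = 0 then ⊤ else ((TbarR k : ℝ) : EReal)) else ⊤
    (Tbar 0 = (0 : EReal)) ∧
    (∀ k < K, Tbar k ≤ Tbar (k + 1)) ∧
    (∃ J < K, (Tbar J ≤ (T : EReal) ∧ (T : EReal) < Tbar (J + 1)) ∧
      (∀ J' < K, Tbar J' ≤ (T : EReal) ∧ (T : EReal) < Tbar (J' + 1) → J' = J) ∧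
      (let τstar : ℕ → ℝ := fun k =>
        if k ≤ J then
          (T - TbarR J) * a k / (∑ l ∈ range (J + 1), a l)
            + ∑ j ∈ Finset.Ico k J,
                (TbarR (j + 1) - TbarR j) * a k / (∑ l ∈ range (j + 1), a l)
        else 0
      τstar ∈ 𝒯 ∧ (∀ τ ∈ 𝒯, σhat2 τstar ≤ σhat2 τ) ∧
        (∀ τ ∈ 𝒯, σhat2 τ = σhat2 τstar → τ = τstar))) := by
  intro 𝒯 σhat2 TbarR Tbar
  classical
  have hK0 : 0 < K := by omega
  -- sortedness chain
  have hchain : ∀ k m, k ≤ m → m < K → a m * S0 m ≤ a k * S0 k := by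
    intro k m hkm
    induction m, hkm using Nat.le_induction with
    | base => intro _; exact le_refl _
    | succ m hkm ih => intro hmK; exact (hsort m hmK).trans (ih (by omega))
  -- difference formula for thresholds
  have hdiff : ∀ k, k + 1 < K → a k ≠ 0 → a (k + 1) ≠ 0 →
      TbarR (k + 1) - TbarR k
        = (∑ l ∈ range (k + 1), a l) * (1 / (a (k + 1) * S0 (k + 1)) - 1 / (a k * S0 k)) := by
    intro k hk hak hak1
    have hSk := (hS k (by omega)).ne'
    have hSk1 := (hS (k + 1) hk).ne'
    simp only [TbarR]
    rw [Finset.sum_range_succ, Finset.sum_range_succ (f := fun l => 1 / S0 l)]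
    field_simp
    ring
  -- part 1
  have hTbar0 : Tbar 0 = (0 : EReal) := by
    simp [Tbar, TbarR, hK0, ha0.ne']
  -- part 2 : single step monotonicity
  have hstep : ∀ k < K, Tbar k ≤ Tbar (k + 1) := by
    intro k hk
    by_cases h1 : k + 1 < K
    · by_cases h2 : a (k + 1) = 0
      · simp [Tbar, h1, h2]
      · have hak1 : 0 < a (k + 1) := (ha (k + 1) h1).lt_of_ne (Ne.symm h2)
        have hSk1 := hS (k + 1) h1
        have hSk := hS k (by omega)
        have hc : 0 < a (k + 1) * S0 (k + 1) := mul_pos hak1 hSk1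
        have hb : 0 < a k * S0 k := lt_of_lt_of_le hc (hsort k h1)
        have hak : a k ≠ 0 := by intro h; rw [h, zero_mul] at hb; exact lt_irrefl 0 hb
        have hle : TbarR k ≤ TbarR (k + 1) := by
          have hdd := hdiff k h1 hak h2
          have hA : 0 ≤ ∑ l ∈ range (k + 1), a l :=
            Finset.sum_nonneg fun l hl => ha l (by have := Finset.mem_range.mp hl; omega)
          have h3 : 1 / (a k * S0 k) ≤ 1 / (a (k + 1) * S0 (k + 1)) :=
            one_div_le_one_div_of_le hc (hsort k h1)
          have h4 : 0 ≤ TbarR (k + 1) - TbarR k := by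
            rw [hdd]; exact mul_nonneg hA (sub_nonneg.2 h3)
          linarith
        simp only [Tbar, if_pos h1, if_pos (show k < K by omega), if_neg h2, if_neg hak]
        exact_mod_cast hle
    · simp [Tbar, h1]
  have hTbar_top : ∀ m, K ≤ m → Tbar m = ⊤ := fun m hm => by simp [Tbar, not_lt.mpr hm]
  have hmono : ∀ j m, j ≤ m → Tbar j ≤ Tbar m := by
    intro j m hjm
    induction m, hjm using Nat.le_induction with
    | base => exact le_refl _
    | succ m hjm ih =>
      refine ih.trans ?_
      by_cases hm : m < K
      · exact hstep m hm
      · rw [hTbar_top m (by omega), hTbar_top (m + 1) (by omega)]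
  -- find J
  have hex : ∃ n, (T : EReal) < Tbar n :=
    ⟨K, by rw [hTbar_top K le_rfl]; exact EReal.coe_lt_top T⟩
  have hNspec : (T : EReal) < Tbar (Nat.find hex) := Nat.find_spec hex
  have hN0 : Nat.find hex ≠ 0 := by
    intro h
    rw [h, hTbar0] at hNspec
    have : (0 : EReal) < (T : EReal) := by exact_mod_cast hT
    exact absurd hNspec (not_lt.mpr this.le)
  have hNK : Nat.find hex ≤ K :=
    Nat.find_le (by rw [hTbar_top K le_rfl]; exact EReal.coe_lt_top T)
  obtain ⟨J, hJN⟩ : ∃ J, Nat.find hex = J + 1 := ⟨Nat.find hex - 1, by omega⟩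
  have hJK : J < K := by omega
  have hJle : Tbar J ≤ (T : EReal) := not_lt.mp (Nat.find_min hex (by omega))
  have hJlt : (T : EReal) < Tbar (J + 1) := by rw [← hJN]; exact hNspec
  have huniq : ∀ J' < K, Tbar J' ≤ (T : EReal) ∧ (T : EReal) < Tbar (J' + 1) → J' = J := by
    rintro J' _ ⟨h1, h2⟩
    by_contra hne
    rcases Nat.lt_or_ge J' J with h | h
    · exact absurd ((hmono (J' + 1) J (by omega)).trans hJle) (not_le.mpr h2)
    · exact absurd ((hmono (J + 1) J' (by omega)).trans h1) (not_le.mpr hJlt)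
  -- basic facts at J
  have haJ : a J ≠ 0 := by
    intro h
    rw [show Tbar J = ⊤ from by simp [Tbar, hJK, h]] at hJle
    exact EReal.coe_ne_top T (top_le_iff.mp hJle)
  have haJpos : 0 < a J := (ha J hJK).lt_of_ne (Ne.symm haJ)
  have hSJ := hS J hJK
  have hTge : TbarR J ≤ T := by
    rw [show Tbar J = ((TbarR J : ℝ) : EReal) from by simp [Tbar, hJK, haJ]] at hJle
    exact_mod_cast hJle
  have hakpos : ∀ k ≤ J, 0 < a k := by
    intro k hk
    have h1 : a J * S0 J ≤ a k * S0 k := hchain k J hk hJK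
    have h2 : 0 < a J * S0 J := mul_pos haJpos hSJ
    rcases (ha k (by omega : k < K)).lt_or_eq with h | h
    · exact h
    · exfalso; have h3 := h2.trans_le h1; rw [← h, zero_mul] at h3; exact lt_irrefl 0 h3
  have hApos : ∀ j, j < K → 0 < ∑ l ∈ range (j + 1), a l := by
    intro j hj
    refine Finset.sum_pos' (fun l hl => ha l (by have := Finset.mem_range.mp hl; omega))
      ⟨0, Finset.mem_range.mpr (by omega), ha0⟩
  have hHpos : 0 < ∑ l ∈ range (J + 1), 1 / S0 l :=
    Finset.sum_pos (fun l hl => one_div_pos.mpr (hS l (by have := Finset.mem_range.mp hl; omega)))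
      ⟨0, Finset.mem_range.mpr (by omega)⟩
  have hTH : 0 < T + ∑ l ∈ range (J + 1), 1 / S0 l := by linarith
  obtain ⟨C, hCdef⟩ : ∃ C : ℝ,
      C = (T + ∑ l ∈ range (J + 1), 1 / S0 l) / (∑ l ∈ range (J + 1), a l) := ⟨_, rfl⟩
  obtain ⟨lam, hlamdef⟩ : ∃ lam : ℝ,
      lam = (∑ l ∈ range (J + 1), a l) / (T + ∑ l ∈ range (J + 1), 1 / S0 l) := ⟨_, rfl⟩
  have hAJpos := hApos J hJK
  have hCpos : 0 < C := by rw [hCdef]; exact div_pos hTH hAJpos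
  have hlampos : 0 < lam := by rw [hlamdef]; exact div_pos hAJpos hTH
  have hlamC : lam * C = 1 := by
    rw [hCdef, hlamdef]; field_simp
  have hTbarRJ : TbarR J
      = (∑ l ∈ range (J + 1), a l) / (a J * S0 J) - ∑ l ∈ range (J + 1), 1 / S0 l := by
    simp only [TbarR]
    rw [Finset.sum_range_succ, Finset.sum_range_succ (f := fun l => 1 / S0 l)]
    have hb : a J * S0 J ≠ 0 := mul_ne_zero haJ hSJ.ne'
    field_simp
    ring
  refine ⟨hTbar0, hstep, J, hJK, ⟨hJle, hJlt⟩, huniq, ?_⟩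
  intro τstar
  -- telescoping identity
  have hGid : ∀ d k, k + d = J →
      (T - TbarR J) / (∑ l ∈ range (J + 1), a l)
        + ∑ j ∈ Finset.Ico k J, (TbarR (j + 1) - TbarR j) / (∑ l ∈ range (j + 1), a l)
      = C - 1 / (a k * S0 k) := by
    intro d
    induction d with
    | zero =>
      intro k hk
      have hkJ : k = J := by omega
      subst hkJ
      rw [Finset.Ico_self, Finset.sum_empty, add_zero, hTbarRJ, hCdef]
      have h2 : a k * S0 k ≠ 0 := mul_ne_zero haJ hSJ.ne'
      field_simp
      ring
    | succ d ih =>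
      intro k hk
      have hih := ih (k + 1) (by omega)
      have hd := hdiff k (by omega) (hakpos k (by omega)).ne' (hakpos (k + 1) (by omega)).ne'
      have hAk : (∑ l ∈ range (k + 1), a l) ≠ 0 := (hApos k (by omega)).ne'
      have hfk : (TbarR (k + 1) - TbarR k) / (∑ l ∈ range (k + 1), a l)
          = 1 / (a (k + 1) * S0 (k + 1)) - 1 / (a k * S0 k) := by
        rw [hd]; exact mul_div_cancel_left₀ _ hAk
      rw [Finset.sum_eq_sum_Ico_succ_bot (by omega : k < J), hfk]
      linarith [hih]
  -- closed form for τstar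
  have hform : ∀ k ≤ J, τstar k = a k * C - 1 / S0 k := by
    intro k hk
    have hSk := hS k (by omega)
    have hak := hakpos k hk
    have h1 : τstar k = a k * ((T - TbarR J) / (∑ l ∈ range (J + 1), a l)
        + ∑ j ∈ Finset.Ico k J, (TbarR (j + 1) - TbarR j) / (∑ l ∈ range (j + 1), a l)) := by
      simp only [τstar, if_pos hk]
      rw [mul_add, Finset.mul_sum]
      congr 1
      · ring
      · exact Finset.sum_congr rfl fun j _ => by ring
    rw [h1, hGid (J - k) k (by omega)]
    field_simp
  have hv : ∀ k ≤ J, 1 + τstar k * S0 k = a k * S0 k * C := by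
    intro k hk
    have hSk := (hS k (by omega)).ne'
    rw [hform k hk]
    field_simp
    ring
  have hkSC : ∀ k ≤ J, 1 ≤ a k * S0 k * C := by
    intro k hk
    have hbpos : 0 < a J * S0 J := mul_pos haJpos hSJ
    have h3 : (∑ l ∈ range (J + 1), a l) / (a J * S0 J)
        ≤ T + ∑ l ∈ range (J + 1), 1 / S0 l := by
      rw [hTbarRJ] at hTge; linarith
    have h4 : (∑ l ∈ range (J + 1), a l) ≤ (T + ∑ l ∈ range (J + 1), 1 / S0 l) * (a J * S0 J) :=
      (div_le_iff₀ hbpos).mp h3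
    have h5 : 1 ≤ a J * S0 J * C := by
      rw [hCdef, ← mul_div_assoc, le_div_iff₀ hAJpos, one_mul]
      nlinarith [h4]
    have h6 : a J * S0 J * C ≤ a k * S0 k * C :=
      mul_le_mul_of_nonneg_right (hchain k J hk hJK) hCpos.le
    linarith
  have hts_nonneg : ∀ k ≤ J, 0 ≤ τstar k := by
    intro k hk
    have hSk := hS k (by omega)
    rw [hform k hk, sub_nonneg, div_le_iff₀ hSk]
    nlinarith [hkSC k hk]
  have hts_zero : ∀ k, J < k → τstar k = 0 := by
    intro k hk
    simp only [τstar, if_neg (by omega : ¬ k ≤ J)]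
  have hsum : ∑ k ∈ range K, τstar k = T := by
    rw [← Finset.sum_range_add_sum_Ico _ (by omega : J + 1 ≤ K)]
    have h2 : ∑ k ∈ Finset.Ico (J + 1) K, τstar k = 0 :=
      Finset.sum_eq_zero fun k hk => hts_zero k (by have := (Finset.mem_Ico.mp hk).1; omega)
    rw [h2, add_zero]
    rw [Finset.sum_congr rfl (fun k hk => hform k (by have := Finset.mem_range.mp hk; omega))]
    rw [Finset.sum_sub_distrib, ← Finset.sum_mul, hCdef]
    rw [← mul_div_assoc, mul_div_cancel_left₀ _ hAJpos.ne']
    ring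
  have hmem : τstar ∈ 𝒯 := by
    refine ⟨fun k hk => ?_, fun k hk => hts_zero k (by omega), le_of_eq hsum⟩
    by_cases hkJ : k ≤ J
    · exact hts_nonneg k hkJ
    · rw [hts_zero k (by omega)]
  have hveq : ∀ k ≤ J, a k ^ 2 * S0 k ^ 2 = lam ^ 2 * (1 + τstar k * S0 k) ^ 2 := by
    intro k hk
    rw [hv k hk]
    have h1 : lam ^ 2 * (a k * S0 k * C) ^ 2 = (lam * C) ^ 2 * (a k * S0 k) ^ 2 := by ring
    rw [h1, hlamC, one_pow, one_mul]
    ring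
  have hinact : ∀ k, J < k → k < K → a k ^ 2 * S0 k ^ 2 < lam ^ 2 := by
    intro k hk1 hk2
    have hJ1K : J + 1 < K := by omega
    have hcase : a (J + 1) * S0 (J + 1) < lam := by
      by_cases h0 : a (J + 1) = 0
      · rw [h0, zero_mul]; exact hlampos
      · have hapos : 0 < a (J + 1) := (ha _ hJ1K).lt_of_ne (Ne.symm h0)
        have hSpos := hS (J + 1) hJ1K
        have hcpos : 0 < a (J + 1) * S0 (J + 1) := mul_pos hapos hSpos
        have hlt : T < TbarR (J + 1) := by
          rw [show Tbar (J + 1) = ((TbarR (J + 1) : ℝ) : EReal) from by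
            simp [Tbar, hJ1K, h0]] at hJlt
          exact_mod_cast hJlt
        simp only [TbarR] at hlt
        have h3 : T + ∑ l ∈ range (J + 1), 1 / S0 l
            < (∑ l ∈ range (J + 1), a l) / (a (J + 1) * S0 (J + 1)) := by linarith
        have h4 := (lt_div_iff₀ hcpos).mp h3
        rw [hlamdef, lt_div_iff₀ hTH]
        linarith
    have hchk : a k * S0 k ≤ a (J + 1) * S0 (J + 1) := hchain (J + 1) k (by omega) hk2
    have h0k : 0 ≤ a k * S0 k := mul_nonneg (ha k hk2) (hS k hk2).le
    nlinarith [lt_of_le_of_lt hchk hcase]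
  -- sum decomposition
  have hsplit : ∀ τ : ℕ → ℝ,
      ∑ k ∈ range K, (a k ^ 2 * (S0 k / (1 + τ k * S0 k))
          - a k ^ 2 * (S0 k / (1 + τstar k * S0 k)) + lam ^ 2 * (τ k - τstar k))
        = σhat2 τ - σhat2 τstar + lam ^ 2 * (∑ k ∈ range K, τ k - T) := by
    intro τ
    simp only [σhat2]
    rw [Finset.sum_add_distrib, Finset.sum_sub_distrib, ← Finset.mul_sum,
      Finset.sum_sub_distrib, hsum]
  have hterm_nonneg : ∀ τ : ℕ → ℝ, (∀ k < K, 0 ≤ τ k) → ∀ k ∈ range K,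
      0 ≤ a k ^ 2 * (S0 k / (1 + τ k * S0 k))
          - a k ^ 2 * (S0 k / (1 + τstar k * S0 k)) + lam ^ 2 * (τ k - τstar k) := by
    intro τ hτnn k hk
    have hkK := Finset.mem_range.mp hk
    have hSk := hS k hkK
    by_cases hkJ : k ≤ J
    · exact key_ge _ _ _ _ _ hSk (hts_nonneg k hkJ) (hτnn k hkK)
        (le_of_eq (hveq k hkJ)) (Or.inr (hveq k hkJ))
    · have h0 := hts_zero k (by omega)
      refine key_ge _ _ _ _ _ hSk (le_of_eq h0.symm) (hτnn k hkK) ?_ (Or.inl h0)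
      rw [h0]
      nlinarith [hinact k (by omega) hkK]
  have hmin : ∀ τ ∈ 𝒯, σhat2 τstar ≤ σhat2 τ := by
    rintro τ ⟨h1, h2, h3⟩
    have h4 := Finset.sum_nonneg (hterm_nonneg τ h1)
    rw [hsplit τ] at h4
    nlinarith [mul_nonneg (sq_nonneg lam) (sub_nonneg.2 h3)]
  refine ⟨hmem, hmin, ?_⟩
  rintro τ ⟨h1, h2, h3⟩ hEq
  have hnn := hterm_nonneg τ h1
  have hsum0 : ∑ k ∈ range K, (a k ^ 2 * (S0 k / (1 + τ k * S0 k))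
      - a k ^ 2 * (S0 k / (1 + τstar k * S0 k)) + lam ^ 2 * (τ k - τstar k)) = 0 := by
    have h5 : ∑ k ∈ range K, (a k ^ 2 * (S0 k / (1 + τ k * S0 k))
        - a k ^ 2 * (S0 k / (1 + τstar k * S0 k)) + lam ^ 2 * (τ k - τstar k)) ≤ 0 := by
      rw [hsplit τ, hEq]
      nlinarith [mul_nonneg (sq_nonneg lam) (sub_nonneg.2 h3)]
    exact le_antisymm h5 (Finset.sum_nonneg hnn)
  have hzero := (Finset.sum_eq_zero_iff_of_nonneg hnn).mp hsum0
  funext k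
  by_cases hkK : k < K
  · by_cases hkJ : k ≤ J
    · exact key_eq_active _ _ _ _ _ (hS k hkK) (hts_nonneg k hkJ) (h1 k hkK)
        (hakpos k hkJ) (hveq k hkJ) (hzero k (Finset.mem_range.mpr hkK))
    · have h0 := hts_zero k (by omega)
      rw [h0]
      have hz := hzero k (Finset.mem_range.mpr hkK)
      rw [h0] at hz
      exact key_eq_inactive _ _ _ _ (hS k hkK) (h1 k hkK) (hinact k (by omega) hkK) hz
  · rw [h2 k (by omega), hts_zero k (by omega)]
end
end

section
/- Fix K ≥ 1 attributes with prior variances Σ⁰_k > 0, a budget T > 0, decision-maker weights α^D_k ≥ 0 and researcher weights α^R_k ≥ 0. Set λ_k := 2α^R_k α^D_k − (α^D_k)² and auxiliary weights α̂_k := √(max{λ_k, 0}). Then a test allocation τ ∈ 𝒯 maximizes the researcher's reduced objective G(τ) := −Σ_k λ_k Σ̂_k(τ_k) over 𝒯 if and only if τ minimizes the auxiliary single-player objective Σ_k α̂_k² Σ̂_k(τ_k) over 𝒯 and τ_k = 0 for every k with λ_k < 0. -/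
noncomputable section

open Finset

/-- Theorem 2 of the paper (equilibrium test allocation via auxiliary
weights).  `S0 k` are the prior variances, `aD k` the decision-maker's weights,
`aR k` the researcher's weights, `lam k = 2 α^R_k α^D_k − (α^D_k)²`, and
`ahat k = √(max{λ_k, 0})` the auxiliary weights.  A test allocation `τ ∈ 𝒯`
maximizes the researcher's reduced objective `G` over `𝒯` iff it minimizes the
auxiliary single-player objective over `𝒯` and puts no tests on attributes with
`λ_k < 0`. -/
theorem stmt_2
    (K : ℕ) (hK : 1 ≤ K)
    (S0 aD aR : Fin K → ℝ) (T : ℝ)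
    (hS : ∀ k, 0 < S0 k) (haD : ∀ k, 0 ≤ aD k) (haR : ∀ k, 0 ≤ aR k)
    (hT : 0 < T) :
    let 𝒯 : Set (Fin K → ℝ) := {τ | (∀ k, 0 ≤ τ k) ∧ ∑ k, τ k ≤ T}
    let Shat : (Fin K → ℝ) → Fin K → ℝ := fun τ k => S0 k / (1 + τ k * S0 k)
    let lam : Fin K → ℝ := fun k => 2 * aR k * aD k - (aD k) ^ 2
    let ahat : Fin K → ℝ := fun k => Real.sqrt (max (lam k) 0)
    let G : (Fin K → ℝ) → ℝ := fun τ => -∑ k, lam k * Shat τ k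
    let H : (Fin K → ℝ) → ℝ := fun τ => ∑ k, (ahat k) ^ 2 * Shat τ k
    ∀ τ ∈ 𝒯,
      ((∀ τ' ∈ 𝒯, G τ' ≤ G τ) ↔
        ((∀ τ' ∈ 𝒯, H τ ≤ H τ') ∧ ∀ k, lam k < 0 → τ k = 0)) := by
  intro 𝒯 Shat lam ahat G H τ hτ
  have hmem_def : ∀ σ : Fin K → ℝ, σ ∈ 𝒯 ↔ (∀ k, 0 ≤ σ k) ∧ ∑ k, σ k ≤ T :=
    fun _ => Iff.rfl
  have hShat_def : ∀ (σ : Fin K → ℝ) k, Shat σ k = S0 k / (1 + σ k * S0 k) :=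
    fun _ _ => rfl
  have hG_def : ∀ σ, G σ = -∑ k, lam k * Shat σ k := fun _ => rfl
  have hH_def : ∀ σ, H σ = ∑ k, (ahat k) ^ 2 * Shat σ k := fun _ => rfl
  have hpos : ∀ σ : Fin K → ℝ, (∀ k, 0 ≤ σ k) → ∀ k, 0 < 1 + σ k * S0 k := by
    intro σ hσ k
    nlinarith [hS k, hσ k, mul_nonneg (hσ k) (hS k).le]
  have hShat_le : ∀ σ : Fin K → ℝ, (∀ k, 0 ≤ σ k) → ∀ k, Shat σ k ≤ S0 k := by
    intro σ hσ k
    rw [hShat_def, div_le_iff₀ (hpos σ hσ k)]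
    nlinarith [hσ k, hS k, mul_nonneg (hσ k) (hS k).le]
  have hShat_lt : ∀ σ : Fin K → ℝ, (∀ k, 0 ≤ σ k) → ∀ k, 0 < σ k → Shat σ k < S0 k := by
    intro σ hσ k hk
    rw [hShat_def, div_lt_iff₀ (hpos σ hσ k)]
    nlinarith [hS k, mul_pos hk (hS k)]
  have hShat0 : ∀ (σ : Fin K → ℝ) k, σ k = 0 → Shat σ k = S0 k := by
    intro σ k hk; rw [hShat_def, hk]; simp
  have hahat_sq : ∀ k, (ahat k) ^ 2 = max (lam k) 0 :=
    fun k => Real.sq_sqrt (le_max_right _ _)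
  have hdecomp : ∀ σ, G σ = -(H σ) + ∑ k, (-(min (lam k) 0)) * Shat σ k := by
    intro σ
    have h1 : ∀ k ∈ Finset.univ (α := Fin K), (ahat k) ^ 2 * Shat σ k
        = lam k * Shat σ k + (-(min (lam k) 0)) * Shat σ k := by
      intro k _
      rw [hahat_sq]
      rcases le_total (lam k) 0 with h | h
      · rw [max_eq_right h, min_eq_left h]; ring
      · rw [max_eq_left h, min_eq_right h]; ring
    rw [hG_def, hH_def, Finset.sum_congr rfl h1, Finset.sum_add_distrib]
    ring
  set C : ℝ := ∑ k, (-(min (lam k) 0)) * S0 k with hC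
  have hmin_nonneg : ∀ k, 0 ≤ -(min (lam k) 0) :=
    fun k => neg_nonneg.mpr (min_le_right _ _)
  have hGle : ∀ σ : Fin K → ℝ, (∀ k, 0 ≤ σ k) → G σ ≤ -(H σ) + C := by
    intro σ hσ
    rw [hdecomp]
    have := Finset.sum_le_sum (s := Finset.univ)
      (fun (k : Fin K) _ => mul_le_mul_of_nonneg_left (hShat_le σ hσ k) (hmin_nonneg k))
    linarith
  -- G σ achieves the bound exactly when σ vanishes on negative coordinates
  have hGeq : ∀ σ : Fin K → ℝ, (∀ k, lam k < 0 → σ k = 0) → G σ = -(H σ) + C := by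
    intro σ hσ
    rw [hdecomp]
    congr 1
    refine Finset.sum_congr rfl fun k _ => ?_
    by_cases h : lam k < 0
    · rw [hShat0 σ k (hσ k h)]
    · rw [min_eq_right (not_lt.mp h)]; ring
  -- zeroing operation
  have hzero : ∀ σ : Fin K → ℝ, σ ∈ 𝒯 →
      (fun k => if lam k < 0 then 0 else σ k) ∈ 𝒯 ∧
      H (fun k => if lam k < 0 then 0 else σ k) = H σ ∧
      G (fun k => if lam k < 0 then 0 else σ k) = -(H σ) + C := by
    intro σ hσ
    obtain ⟨hσ1, hσ2⟩ := (hmem_def σ).mp hσ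
    have hmem : (fun k => if lam k < 0 then 0 else σ k) ∈ 𝒯 := by
      rw [hmem_def]
      constructor
      · intro k; by_cases h : lam k < 0 <;> simp [h, hσ1 k]
      · refine le_trans (Finset.sum_le_sum fun k _ => ?_) hσ2
        by_cases h : lam k < 0 <;> simp [h, hσ1 k]
    have hH : H (fun k => if lam k < 0 then 0 else σ k) = H σ := by
      rw [hH_def, hH_def]
      refine Finset.sum_congr rfl fun k _ => ?_
      by_cases h : lam k < 0
      · rw [hahat_sq, max_eq_right h.le]; ring
      · have hv : Shat (fun k => if lam k < 0 then 0 else σ k) k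
            = S0 k / (1 + (if lam k < 0 then 0 else σ k) * S0 k) := rfl
        rw [hv, if_neg h, hShat_def]
    have hG : G (fun k => if lam k < 0 then 0 else σ k) = -(H σ) + C := by
      rw [← hH]
      refine hGeq _ fun k hk => ?_
      simp [hk]
    exact ⟨hmem, hH, hG⟩
  constructor
  · intro hmax
    have hτ1 := ((hmem_def τ).mp hτ).1
    have hτzero : ∀ k, lam k < 0 → τ k = 0 := by
      intro k hk
      by_contra hne
      have hkpos : 0 < τ k := lt_of_le_of_ne (hτ1 k) (Ne.symm hne)
      obtain ⟨hmem0, _, hG0⟩ := hzero τ hτ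
      have hstrict : G τ < -(H τ) + C := by
        rw [hdecomp]
        have : ∑ j, (-(min (lam j) 0)) * Shat τ j < C := by
          refine Finset.sum_lt_sum
            (fun j _ => mul_le_mul_of_nonneg_left (hShat_le τ hτ1 j) (hmin_nonneg j))
            ⟨k, Finset.mem_univ k, ?_⟩
          have hco : 0 < -(min (lam k) 0) := by
            rw [min_eq_left hk.le]; linarith
          exact mul_lt_mul_of_pos_left (hShat_lt τ hτ1 k hkpos) hco
        linarith
      have := hmax _ hmem0
      rw [hG0] at this
      linarith
    refine ⟨?_, hτzero⟩
    intro τ' hτ'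
    obtain ⟨hmem0, _, hG0⟩ := hzero τ' hτ'
    have h1 := hmax _ hmem0
    rw [hG0, hGeq τ hτzero] at h1
    linarith
  · rintro ⟨hminH, hτzero⟩
    intro τ' hτ'
    have h1 : G τ' ≤ -(H τ') + C := hGle τ' ((hmem_def τ').mp hτ').1
    have h2 := hminH τ' hτ'
    rw [hGeq τ hτzero]
    linarith
end
end

section
/- In the organization setting, suppose α^D₁ ≥ α^D₂ > 0 and fix β ∈ [0, 1/2]. Define γ₁(β) := −(1/2 − β)·α^D₁/α^D₂ and γ₂(β) := (1/2 − β)·α^D₂/α^D₁, so γ₁(β) ≤ 0 ≤ γ₂(β). Then for every γ ∈ Γ(β) the analyst's equilibrium test allocation satisfies: τ*(β,γ) = (0, T) if γ > γ₂(β); τ*(β,γ) = (0, 0) if γ₁(β) ≤ γ ≤ γ₂(β); and τ*(β,γ) = (T, 0) if γ < γ₁(β). Moreover, with β₁ := (α^D₁)²/(2((α^D₁)² + (α^D₂)²)) and β₂ := (α^D₂)²/(2((α^D₁)² + (α^D₂)²)), one has 0 < β₂ ≤ β₁ < 1/2, γ₁(β) lies in the interior of Γ(β) if and only if β ∈ (β₁,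 1/2], and γ₂(β) lies in the interior of Γ(β) if and only if β ∈ (β₂, 1/2]. -/
noncomputable section

/-! Organization setting (Section 5.1 of the paper), K = 2.

* `Talloc T` is the set `𝒯` of test allocations with budget `T`.
* `Gam aD1 aD2 β` is the set `Γ(β)` of feasible distortions.
* `lam1, lam2` are the parameters `λ₁(β,γ), λ₂(β,γ)` induced by the analyst's
  weights `α^R(β,γ) = (β α^D₁ − γ α^D₂, β α^D₂ + γ α^D₁)`.
* `Gfun` is the researcher's reduced objective `G_{β,γ}`.
* `IsEqAlloc … τ` says that `τ` is the analyst's equilibrium test allocation: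
  `τ = (0,0)` if `λ₁ ≤ 0` and `λ₂ ≤ 0`, and otherwise `τ` is a maximizer of
  `G_{β,γ}` over `𝒯` (which is in fact unique).
* `VD` is the manager's interim expected equilibrium payoff. -/

/-- The set of test allocations with budget `T`. -/
def Talloc (T : ℝ) : Set (ℝ × ℝ) := {τ | 0 ≤ τ.1 ∧ 0 ≤ τ.2 ∧ τ.1 + τ.2 ≤ T}

/-- The set `Γ(β)` of feasible distortions. -/
def Gam (aD1 aD2 β : ℝ) : Set ℝ := Set.Icc (-(β * aD2 / aD1)) (β * aD1 / aD2)

/-- `λ₁(β,γ)`. -/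
def lam1 (aD1 aD2 β γ : ℝ) : ℝ := (2 * β - 1) * aD1 ^ 2 - 2 * γ * aD1 * aD2

/-- `λ₂(β,γ)`. -/
def lam2 (aD1 aD2 β γ : ℝ) : ℝ := (2 * β - 1) * aD2 ^ 2 + 2 * γ * aD1 * aD2

/-- The researcher's reduced objective `G_{β,γ}(τ) = −λ₁ Σ̂₁(τ₁) − λ₂ Σ̂₂(τ₂)`. -/
def Gfun (S1 S2 aD1 aD2 β γ : ℝ) (τ : ℝ × ℝ) : ℝ :=
  -(lam1 aD1 aD2 β γ) * (S1 / (1 + τ.1 * S1)) - lam2 aD1 aD2 β γ * (S2 / (1 + τ.2 * S2))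

/-- `τ` is the analyst's equilibrium test allocation `τ*(β,γ)`. -/
def IsEqAlloc (S1 S2 T aD1 aD2 β γ : ℝ) (τ : ℝ × ℝ) : Prop :=
  (lam1 aD1 aD2 β γ ≤ 0 ∧ lam2 aD1 aD2 β γ ≤ 0 ∧ τ = (0, 0)) ∨
  (¬(lam1 aD1 aD2 β γ ≤ 0 ∧ lam2 aD1 aD2 β γ ≤ 0) ∧ τ ∈ Talloc T ∧
    ∀ τ' ∈ Talloc T, Gfun S1 S2 aD1 aD2 β γ τ' ≤ Gfun S1 S2 aD1 aD2 β γ τ)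

/-- The manager's interim expected equilibrium payoff `V^D`. -/
def VD (S1 S2 aD1 aD2 : ℝ) (τ : ℝ × ℝ) : ℝ :=
  -(aD1 ^ 2) * (S1 / (1 + τ.1 * S1)) - aD2 ^ 2 * (S2 / (1 + τ.2 * S2))

lemma opt_aux (s t T L M : ℝ) (hs : 0 < s) (ht : 0 < t) (hT : 0 < T)
    (hL : L < 0) (hM : 0 < M) (x y : ℝ) (hx : 0 ≤ x) (hy : 0 ≤ y) (hxy : x + y ≤ T) :
    -L * (s / (1 + x * s)) - M * (t / (1 + y * t)) ≤ -L * s - M * (t / (1 + T * t)) ∧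
    (¬(x = 0 ∧ y = T) →
      -L * (s / (1 + x * s)) - M * (t / (1 + y * t)) < -L * s - M * (t / (1 + T * t))) := by
  have hb : 0 < 1 + x * s := by nlinarith
  have hc : 0 < 1 + y * t := by nlinarith
  have hd : 0 < 1 + T * t := by nlinarith
  have hyT : y ≤ T := by linarith
  have hA : s / (1 + x * s) ≤ s := by
    rw [div_le_iff₀ hb]; nlinarith [mul_nonneg (mul_nonneg hx hs.le) hs.le]
  have hB : t / (1 + T * t) ≤ t / (1 + y * t) := by
    rw [div_le_div_iff₀ hd hc]
    nlinarith [mul_le_mul_of_nonneg_left (mul_le_mul_of_nonneg_right hyT ht.le) ht.le]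
  have m1 : -L * (s / (1 + x * s)) ≤ -L * s := mul_le_mul_of_nonneg_left hA (by linarith)
  have m2 : M * (t / (1 + T * t)) ≤ M * (t / (1 + y * t)) := mul_le_mul_of_nonneg_left hB hM.le
  refine ⟨by linarith, ?_⟩
  intro hne
  by_cases hx0 : x = 0
  · have hyT' : y < T := lt_of_le_of_ne hyT (fun h => hne ⟨hx0, h⟩)
    have hB' : t / (1 + T * t) < t / (1 + y * t) := by
      rw [div_lt_div_iff₀ hd hc]
      nlinarith [mul_lt_mul_of_pos_left (mul_lt_mul_of_pos_right hyT' ht) ht]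
    have m2' : M * (t / (1 + T * t)) < M * (t / (1 + y * t)) := mul_lt_mul_of_pos_left hB' hM
    linarith
  · have hx' : 0 < x := lt_of_le_of_ne hx (Ne.symm hx0)
    have hA' : s / (1 + x * s) < s := by
      rw [div_lt_iff₀ hb]; nlinarith [mul_pos (mul_pos hx' hs) hs]
    have m1' : -L * (s / (1 + x * s)) < -L * s := mul_lt_mul_of_pos_left hA' (by linarith)
    linarith

/-- Case `λ₁ < 0 < λ₂`: unique equilibrium `(0, T)`. -/
lemma eq_case_0T (S1 S2 T aD1 aD2 β γ : ℝ) (hS1 : 0 < S1) (hS2 : 0 < S2) (hT : 0 < T)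
    (hl1 : lam1 aD1 aD2 β γ < 0) (hl2 : 0 < lam2 aD1 aD2 β γ) :
    IsEqAlloc S1 S2 T aD1 aD2 β γ (0, T) ∧
    ∀ τ, IsEqAlloc S1 S2 T aD1 aD2 β γ τ → τ = (0, T) := by
  have hmem : ((0 : ℝ), T) ∈ Talloc T := ⟨le_rfl, hT.le, by norm_num⟩
  have hval : Gfun S1 S2 aD1 aD2 β γ (0, T)
      = -(lam1 aD1 aD2 β γ) * S1 - lam2 aD1 aD2 β γ * (S2 / (1 + T * S2)) := by
    simp [Gfun]
  have hmax : ∀ τ' ∈ Talloc T,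
      Gfun S1 S2 aD1 aD2 β γ τ' ≤ Gfun S1 S2 aD1 aD2 β γ (0, T) := by
    rintro τ' ⟨h1, h2, h3⟩
    have := (opt_aux S1 S2 T (lam1 aD1 aD2 β γ) (lam2 aD1 aD2 β γ) hS1 hS2 hT hl1 hl2
      τ'.1 τ'.2 h1 h2 h3).1
    rw [hval]; exact this
  constructor
  · exact Or.inr ⟨fun h => absurd h.2 (not_le.mpr hl2), hmem, hmax⟩
  · rintro τ (⟨_, h2, _⟩ | ⟨_, ⟨ht1, ht2, ht3⟩, hmax'⟩)
    · linarith
    · by_contra hne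
      have hne' : ¬(τ.1 = 0 ∧ τ.2 = T) := fun ⟨a, b⟩ => hne (Prod.ext a b)
      have hstrict := (opt_aux S1 S2 T (lam1 aD1 aD2 β γ) (lam2 aD1 aD2 β γ) hS1 hS2 hT hl1 hl2
        τ.1 τ.2 ht1 ht2 ht3).2 hne'
      have hle := hmax' (0, T) hmem
      rw [hval] at hle
      exact absurd hle (not_le.mpr hstrict)

/-- Case `λ₂ < 0 < λ₁`: unique equilibrium `(T, 0)`. -/
lemma eq_case_T0 (S1 S2 T aD1 aD2 β γ : ℝ) (hS1 : 0 < S1) (hS2 : 0 < S2) (hT : 0 < T)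
    (hl1 : 0 < lam1 aD1 aD2 β γ) (hl2 : lam2 aD1 aD2 β γ < 0) :
    IsEqAlloc S1 S2 T aD1 aD2 β γ (T, 0) ∧
    ∀ τ, IsEqAlloc S1 S2 T aD1 aD2 β γ τ → τ = (T, 0) := by
  have hmem : (T, (0 : ℝ)) ∈ Talloc T := ⟨hT.le, le_rfl, by norm_num⟩
  have hval : Gfun S1 S2 aD1 aD2 β γ (T, 0)
      = -(lam2 aD1 aD2 β γ) * S2 - lam1 aD1 aD2 β γ * (S1 / (1 + T * S1)) := by
    simp [Gfun]; ring
  have hG : ∀ τ : ℝ × ℝ, Gfun S1 S2 aD1 aD2 β γ τ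
      = -(lam2 aD1 aD2 β γ) * (S2 / (1 + τ.2 * S2))
        - lam1 aD1 aD2 β γ * (S1 / (1 + τ.1 * S1)) := by
    intro τ; unfold Gfun; ring
  have hmax : ∀ τ' ∈ Talloc T,
      Gfun S1 S2 aD1 aD2 β γ τ' ≤ Gfun S1 S2 aD1 aD2 β γ (T, 0) := by
    rintro τ' ⟨h1, h2, h3⟩
    have := (opt_aux S2 S1 T (lam2 aD1 aD2 β γ) (lam1 aD1 aD2 β γ) hS2 hS1 hT hl2 hl1
      τ'.2 τ'.1 h2 h1 (by linarith)).1
    rw [hval, hG τ']; exact this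
  constructor
  · exact Or.inr ⟨fun h => absurd h.1 (not_le.mpr hl1), hmem, hmax⟩
  · rintro τ (⟨h1, _, _⟩ | ⟨_, ⟨ht1, ht2, ht3⟩, hmax'⟩)
    · linarith
    · by_contra hne
      have hne' : ¬(τ.2 = 0 ∧ τ.1 = T) := fun ⟨a, b⟩ => hne (Prod.ext b a)
      have hstrict := (opt_aux S2 S1 T (lam2 aD1 aD2 β γ) (lam1 aD1 aD2 β γ) hS2 hS1 hT hl2 hl1
        τ.2 τ.1 ht2 ht1 (by linarith)).2 hne'
      have hle := hmax' (T, 0) hmem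
      rw [hval, hG τ] at hle
      exact absurd hle (not_le.mpr hstrict)

set_option maxHeartbeats 1000000 in
lemma stmt4_aux
    (S1 S2 T aD1 aD2 β : ℝ)
    (hS1 : 0 < S1) (hS2 : 0 < S2) (hT : 0 < T)
    (hD : aD2 ≤ aD1) (hD2 : 0 < aD2)
    (hβ : β ∈ Set.Icc (0 : ℝ) (1 / 2)) :
    let γ1 : ℝ := -((1 / 2 - β) * aD1 / aD2)
    let γ2 : ℝ := (1 / 2 - β) * aD2 / aD1
    let β1 : ℝ := aD1 ^ 2 / (2 * (aD1 ^ 2 + aD2 ^ 2))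
    let β2 : ℝ := aD2 ^ 2 / (2 * (aD1 ^ 2 + aD2 ^ 2))
    (γ1 ≤ 0 ∧ 0 ≤ γ2) ∧
    (∀ γ ∈ Gam aD1 aD2 β,
      (γ2 < γ → IsEqAlloc S1 S2 T aD1 aD2 β γ (0, T) ∧
        ∀ τ, IsEqAlloc S1 S2 T aD1 aD2 β γ τ → τ = (0, T)) ∧
      (γ1 ≤ γ → γ ≤ γ2 → IsEqAlloc S1 S2 T aD1 aD2 β γ (0, 0) ∧
        ∀ τ, IsEqAlloc S1 S2 T aD1 aD2 β γ τ → τ = (0, 0)) ∧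
      (γ < γ1 → IsEqAlloc S1 S2 T aD1 aD2 β γ (T, 0) ∧
        ∀ τ, IsEqAlloc S1 S2 T aD1 aD2 β γ τ → τ = (T, 0))) ∧
    (0 < β2 ∧ β2 ≤ β1 ∧ β1 < 1 / 2) ∧
    (γ1 ∈ interior (Gam aD1 aD2 β) ↔ β ∈ Set.Ioc β1 (1 / 2)) ∧
    (γ2 ∈ interior (Gam aD1 aD2 β) ↔ β ∈ Set.Ioc β2 (1 / 2)) := by

  intro γ1 γ2 β1 β2
  simp only [γ1, γ2, β1, β2]
  obtain ⟨hβ0, hβh⟩ := hβ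
  have h1 : 0 < aD1 := lt_of_lt_of_le hD2 hD
  have hhalf : 0 ≤ 1 / 2 - β := by linarith
  have hγ1 : γ1 ≤ 0 := by
    show -((1 / 2 - β) * aD1 / aD2) ≤ 0
    have : 0 ≤ (1 / 2 - β) * aD1 / aD2 := div_nonneg (mul_nonneg hhalf h1.le) hD2.le
    linarith
  have hγ2 : 0 ≤ γ2 := div_nonneg (mul_nonneg hhalf hD2.le) h1.le
  have hden : 0 < 2 * (aD1 ^ 2 + aD2 ^ 2) := by positivity
  refine ⟨⟨hγ1, hγ2⟩, ?_, ⟨?_, ?_, ?_⟩, ?_, ?_⟩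
  · -- equilibrium characterization
    intro γ _
    refine ⟨?_, ?_, ?_⟩
    · -- γ2 < γ
      intro hγ
      have hl2 : 0 < lam2 aD1 aD2 β γ := by
        have h' : (1 / 2 - β) * aD2 < γ * aD1 := (div_lt_iff₀ h1).mp hγ
        unfold lam2; nlinarith [mul_lt_mul_of_pos_right h' hD2]
      have hl1 : lam1 aD1 aD2 β γ < 0 := by
        have hAnn : 0 ≤ (1 / 2 - β) * aD1 / aD2 := div_nonneg (mul_nonneg hhalf h1.le) hD2.le
        have hBnn : 0 ≤ (1 / 2 - β) * aD2 / aD1 := div_nonneg (mul_nonneg hhalf hD2.le) h1.le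
        have hγ' : -((1 / 2 - β) * aD1 / aD2) < γ := by linarith
        have h'' : -γ < (1 / 2 - β) * aD1 / aD2 := by linarith [neg_lt.mp hγ']
        have h' : -γ * aD2 < (1 / 2 - β) * aD1 := (lt_div_iff₀ hD2).mp h''
        unfold lam1; nlinarith [mul_lt_mul_of_pos_right h' h1]
      exact eq_case_0T S1 S2 T aD1 aD2 β γ hS1 hS2 hT hl1 hl2
    · -- γ1 ≤ γ ≤ γ2
      intro hga hgb
      have hl1 : lam1 aD1 aD2 β γ ≤ 0 := by
        have h'' : -γ ≤ (1 / 2 - β) * aD1 / aD2 := by linarith [neg_le.mp hga]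
        have h' : -γ * aD2 ≤ (1 / 2 - β) * aD1 := (le_div_iff₀ hD2).mp h''
        unfold lam1; nlinarith [mul_le_mul_of_nonneg_right h' h1.le]
      have hl2 : lam2 aD1 aD2 β γ ≤ 0 := by
        have h' : γ * aD1 ≤ (1 / 2 - β) * aD2 := (le_div_iff₀ h1).mp hgb
        unfold lam2; nlinarith [mul_le_mul_of_nonneg_right h' hD2.le]
      constructor
      · exact Or.inl ⟨hl1, hl2, rfl⟩
      · rintro τ (⟨_, _, h⟩ | ⟨hn, _, _⟩)
        · exact h
        · exact absurd ⟨hl1, hl2⟩ hn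
    · -- γ < γ1
      intro hγ
      have hl1 : 0 < lam1 aD1 aD2 β γ := by
        have h'' : (1 / 2 - β) * aD1 / aD2 < -γ := lt_neg.mp hγ
        have h' : (1 / 2 - β) * aD1 < -γ * aD2 := (div_lt_iff₀ hD2).mp h''
        unfold lam1; nlinarith [mul_lt_mul_of_pos_right h' h1]
      have hl2 : lam2 aD1 aD2 β γ < 0 := by
        have hAnn : 0 ≤ (1 / 2 - β) * aD1 / aD2 := div_nonneg (mul_nonneg hhalf h1.le) hD2.le
        have hBnn : 0 ≤ (1 / 2 - β) * aD2 / aD1 := div_nonneg (mul_nonneg hhalf hD2.le) h1.le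
        have hγ' : γ < (1 / 2 - β) * aD2 / aD1 := by linarith
        have h' : γ * aD1 < (1 / 2 - β) * aD2 := (lt_div_iff₀ h1).mp hγ'
        unfold lam2; nlinarith [mul_lt_mul_of_pos_right h' hD2]
      exact eq_case_T0 S1 S2 T aD1 aD2 β γ hS1 hS2 hT hl1 hl2
  · exact div_pos (by positivity) hden
  · have hsq : aD2 ^ 2 ≤ aD1 ^ 2 := by nlinarith
    rw [div_le_div_iff₀ hden hden]
    nlinarith [mul_le_mul_of_nonneg_right hsq hden.le]
  · rw [div_lt_iff₀ hden]; nlinarith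
  · -- γ1 interior iff
    rw [show Gam aD1 aD2 β = Set.Icc (-(β * aD2 / aD1)) (β * aD1 / aD2) from rfl, interior_Icc]
    constructor
    · rintro ⟨hlo, _⟩
      refine ⟨?_, hβh⟩
      have h' : (1 / 2 - β) * aD1 / aD2 < β * aD2 / aD1 := by
        have := neg_lt_neg_iff.mp hlo; linarith
      have h'' := (div_lt_div_iff₀ hD2 h1).mp h'
      rw [div_lt_iff₀ hden]; nlinarith
    · rintro ⟨hb1, _⟩
      rw [div_lt_iff₀ hden] at hb1
      have hβpos : 0 < β := by nlinarith
      constructor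
      · show -(β * aD2 / aD1) < -((1 / 2 - β) * aD1 / aD2)
        have h'' : (1 / 2 - β) * aD1 * aD1 < β * aD2 * aD2 := by nlinarith
        have h' : (1 / 2 - β) * aD1 / aD2 < β * aD2 / aD1 := (div_lt_div_iff₀ hD2 h1).mpr h''
        linarith
      · show -((1 / 2 - β) * aD1 / aD2) < β * aD1 / aD2
        have hp : 0 < β * aD1 / aD2 := div_pos (mul_pos hβpos h1) hD2
        have hAnn : 0 ≤ (1 / 2 - β) * aD1 / aD2 := div_nonneg (mul_nonneg hhalf h1.le) hD2.le
        linarith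
  · -- γ2 interior iff
    rw [show Gam aD1 aD2 β = Set.Icc (-(β * aD2 / aD1)) (β * aD1 / aD2) from rfl, interior_Icc]
    constructor
    · rintro ⟨_, hhi⟩
      refine ⟨?_, hβh⟩
      have h'' := (div_lt_div_iff₀ h1 hD2).mp hhi
      rw [div_lt_iff₀ hden]; nlinarith
    · rintro ⟨hb2, _⟩
      rw [div_lt_iff₀ hden] at hb2
      have hβpos : 0 < β := by nlinarith
      constructor
      · show -(β * aD2 / aD1) < (1 / 2 - β) * aD2 / aD1
        have hneg : 0 < β * aD2 / aD1 := div_pos (mul_pos hβpos hD2) h1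
        have hpos : 0 ≤ (1 / 2 - β) * aD2 / aD1 := div_nonneg (mul_nonneg hhalf hD2.le) h1.le
        linarith
      · show (1 / 2 - β) * aD2 / aD1 < β * aD1 / aD2
        have h'' : (1 / 2 - β) * aD2 * aD2 < β * aD1 * aD1 := by nlinarith
        exact (div_lt_div_iff₀ h1 hD2).mpr h''

/-- Characterization of the equilibrium test allocation for an
insensitive analyst (`β ≤ 1/2`), Lemma 3 of the paper. -/
theorem stmt_4
    (S1 S2 T aD1 aD2 β : ℝ)
    (hS1 : 0 < S1) (hS2 : 0 < S2) (hT : 0 < T)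
    (hD : aD2 ≤ aD1) (hD2 : 0 < aD2)
    (hβ : β ∈ Set.Icc (0 : ℝ) (1 / 2)) :
    let γ1 : ℝ := -((1 / 2 - β) * aD1 / aD2)
    let γ2 : ℝ := (1 / 2 - β) * aD2 / aD1
    let β1 : ℝ := aD1 ^ 2 / (2 * (aD1 ^ 2 + aD2 ^ 2))
    let β2 : ℝ := aD2 ^ 2 / (2 * (aD1 ^ 2 + aD2 ^ 2))
    (γ1 ≤ 0 ∧ 0 ≤ γ2) ∧
    (∀ γ ∈ Gam aD1 aD2 β,
      (γ2 < γ → IsEqAlloc S1 S2 T aD1 aD2 β γ (0, T) ∧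
        ∀ τ, IsEqAlloc S1 S2 T aD1 aD2 β γ τ → τ = (0, T)) ∧
      (γ1 ≤ γ → γ ≤ γ2 → IsEqAlloc S1 S2 T aD1 aD2 β γ (0, 0) ∧
        ∀ τ, IsEqAlloc S1 S2 T aD1 aD2 β γ τ → τ = (0, 0)) ∧
      (γ < γ1 → IsEqAlloc S1 S2 T aD1 aD2 β γ (T, 0) ∧
        ∀ τ, IsEqAlloc S1 S2 T aD1 aD2 β γ τ → τ = (T, 0))) ∧
    (0 < β2 ∧ β2 ≤ β1 ∧ β1 < 1 / 2) ∧
    (γ1 ∈ interior (Gam aD1 aD2 β) ↔ β ∈ Set.Ioc β1 (1 / 2)) ∧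
    (γ2 ∈ interior (Gam aD1 aD2 β) ↔ β ∈ Set.Ioc β2 (1 / 2)) := by
  intro γ1 γ2 β1 β2
  exact stmt4_aux S1 S2 T aD1 aD2 β hS1 hS2 hT hD hD2 hβ
end
end

section
/- In the organization setting, suppose α^D₁, α^D₂ > 0 and fix β > 1/2. Define α̂_k(β,γ) := √(max{λ_k(β,γ), 0}) for k = 1,2 and, whenever α̂₁(β,γ) + α̂₂(β,γ) > 0, τ̃₁(β,γ) := (α̂₁(β,γ)Σ⁰₁ − α̂₂(β,γ)Σ⁰₂)/(Σ⁰₁Σ⁰₂(α̂₁(β,γ) + α̂₂(β,γ))) + α̂₁(β,γ)·T/(α̂₁(β,γ) + α̂₂(β,γ)). Then there exist γ_I(β) < γ_II(β), both in the interior of Γ(β), such that for all γ ∈ Γ(β): τ*(β,γ) = (T, 0) if γ ≤ γ_I(β); τ*(β,γ) = (τ̃₁(β,γ), T − τ̃₁(β,γ)) if γ_I(β) < γ < γ_II(β); and τ*(β,γ) = (0, T) if γ ≥ γ_II(β). Moreover, γ ↦ τ̃₁(β,γ) is strictly decreasing on (γ_I(β), γ_II(β)). -/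
noncomputable section

private lemma tangent_id (S l t t' : ℝ) (hS : 0 < S) (ht : 0 ≤ t) (ht' : 0 ≤ t') :
    -l * (S / (1 + t' * S)) =
      -l * (S / (1 + t * S)) + l * (S ^ 2 / (1 + t * S) ^ 2) * (t' - t)
        - l * (S ^ 3 * (t' - t) ^ 2 / ((1 + t * S) ^ 2 * (1 + t' * S))) := by
  have h1 : (0:ℝ) < 1 + t * S := by nlinarith
  have h2 : (0:ℝ) < 1 + t' * S := by nlinarith
  field_simp
  ring

private lemma lt_of_sq_lt' (u v : ℝ) (hu : 0 ≤ u) (hv : 0 ≤ v) (h : u ^ 2 < v ^ 2) : u < v := by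
  nlinarith

private lemma max_T0 (S1 S2 T l1 l2 : ℝ) (hS1 : 0 < S1) (hS2 : 0 < S2) (hT : 0 < T)
    (hl1 : 0 < l1) (hle : l2 * (S2 ^ 2 * (1 + T * S1) ^ 2) ≤ l1 * S1 ^ 2)
    (x y : ℝ) (hx : 0 ≤ x) (hy : 0 ≤ y) (hxy : x + y ≤ T) (hne : (x, y) ≠ ((T : ℝ), (0 : ℝ))) :
    -l1 * (S1 / (1 + x * S1)) - l2 * (S2 / (1 + y * S2)) <
      -l1 * (S1 / (1 + T * S1)) - l2 * (S2 / (1 + 0 * S2)) := by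
  have hxT : x ≠ T := by
    intro h
    subst h
    have hy0' : y = 0 := le_antisymm (by linarith) hy
    exact hne (by rw [hy0'])
  have hT0 : (0:ℝ) < 1 + T * S1 := by nlinarith
  have hx0 : (0:ℝ) < 1 + x * S1 := by nlinarith
  have hy0 : (0:ℝ) < 1 + y * S2 := by nlinarith
  have e1 := tangent_id S1 l1 T x hS1 hT.le hx
  have hR1 : 0 < l1 * (S1 ^ 3 * (x - T) ^ 2 / ((1 + T * S1) ^ 2 * (1 + x * S1))) := by
    have hq : 0 < (x - T) ^ 2 := pow_two_pos_of_ne_zero (sub_ne_zero.2 hxT)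
    exact mul_pos hl1 (div_pos (mul_pos (pow_pos hS1 3) hq) (by positivity))
  set m1 : ℝ := l1 * (S1 ^ 2 / (1 + T * S1) ^ 2) with hm1
  have hm1pos : 0 < m1 := by rw [hm1]; positivity
  rcases le_or_gt 0 l2 with hl2 | hl2
  · have e2 := tangent_id S2 l2 0 y hS2 le_rfl hy
    have hR2 : 0 ≤ l2 * (S2 ^ 3 * (y - 0) ^ 2 / ((1 + 0 * S2) ^ 2 * (1 + y * S2))) := by
      apply mul_nonneg hl2; positivity
    have hd : (0:ℝ) < (1 + T * S1) ^ 2 := by positivity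
    have hcmp : l2 * (S2 ^ 2 / (1 + 0 * S2) ^ 2) ≤ m1 := by
      have h1 : l2 * (S2 ^ 2 / (1 + 0 * S2) ^ 2) = l2 * S2 ^ 2 := by norm_num
      rw [hm1, h1, mul_div_assoc', le_div_iff₀ hd]
      nlinarith [hle]
    have h4 : l2 * (S2 ^ 2 / (1 + 0 * S2) ^ 2) * (y - 0) ≤ m1 * (y - 0) :=
      mul_le_mul_of_nonneg_right hcmp (by linarith)
    have h3 : m1 * (x - T) + m1 * (y - 0) ≤ 0 := by nlinarith
    linarith [e1, e2, hR1, hR2, h3, h4]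
  · have hmono : S2 / (1 + y * S2) ≤ S2 / (1 + 0 * S2) := by
      rw [div_le_div_iff₀ hy0 (by norm_num : (0:ℝ) < 1 + 0 * S2)]
      nlinarith
    have h5 : -l2 * (S2 / (1 + y * S2)) ≤ -l2 * (S2 / (1 + 0 * S2)) :=
      mul_le_mul_of_nonneg_left hmono (by linarith)
    have h3 : m1 * (x - T) ≤ 0 := by nlinarith
    linarith [e1, hR1, h5, h3]

private lemma max_0T (S1 S2 T l1 l2 : ℝ) (hS1 : 0 < S1) (hS2 : 0 < S2) (hT : 0 < T)
    (hl2 : 0 < l2) (hle : l1 * (S1 ^ 2 * (1 + T * S2) ^ 2) ≤ l2 * S2 ^ 2)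
    (x y : ℝ) (hx : 0 ≤ x) (hy : 0 ≤ y) (hxy : x + y ≤ T) (hne : (x, y) ≠ ((0 : ℝ), (T : ℝ))) :
    -l1 * (S1 / (1 + x * S1)) - l2 * (S2 / (1 + y * S2)) <
      -l1 * (S1 / (1 + 0 * S1)) - l2 * (S2 / (1 + T * S2)) := by
  have hyT : y ≠ T := by
    intro h
    subst h
    have hx0' : x = 0 := le_antisymm (by linarith) hx
    exact hne (by rw [hx0'])
  have hT0 : (0:ℝ) < 1 + T * S2 := by nlinarith
  have hx0 : (0:ℝ) < 1 + x * S1 := by nlinarith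
  have hy0 : (0:ℝ) < 1 + y * S2 := by nlinarith
  have e1 := tangent_id S2 l2 T y hS2 hT.le hy
  have hR1 : 0 < l2 * (S2 ^ 3 * (y - T) ^ 2 / ((1 + T * S2) ^ 2 * (1 + y * S2))) := by
    have hq : 0 < (y - T) ^ 2 := pow_two_pos_of_ne_zero (sub_ne_zero.2 hyT)
    exact mul_pos hl2 (div_pos (mul_pos (pow_pos hS2 3) hq) (by positivity))
  set m2 : ℝ := l2 * (S2 ^ 2 / (1 + T * S2) ^ 2) with hm2
  have hm2pos : 0 < m2 := by rw [hm2]; positivity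
  rcases le_or_gt 0 l1 with hl1 | hl1
  · have e2 := tangent_id S1 l1 0 x hS1 le_rfl hx
    have hR2 : 0 ≤ l1 * (S1 ^ 3 * (x - 0) ^ 2 / ((1 + 0 * S1) ^ 2 * (1 + x * S1))) := by
      apply mul_nonneg hl1; positivity
    have hd : (0:ℝ) < (1 + T * S2) ^ 2 := by positivity
    have hcmp : l1 * (S1 ^ 2 / (1 + 0 * S1) ^ 2) ≤ m2 := by
      have h1 : l1 * (S1 ^ 2 / (1 + 0 * S1) ^ 2) = l1 * S1 ^ 2 := by norm_num
      rw [hm2, h1, mul_div_assoc', le_div_iff₀ hd]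
      nlinarith [hle]
    have h4 : l1 * (S1 ^ 2 / (1 + 0 * S1) ^ 2) * (x - 0) ≤ m2 * (x - 0) :=
      mul_le_mul_of_nonneg_right hcmp (by linarith)
    have h3 : m2 * (y - T) + m2 * (x - 0) ≤ 0 := by nlinarith
    linarith [e1, e2, hR1, hR2, h3, h4]
  · have hmono : S1 / (1 + x * S1) ≤ S1 / (1 + 0 * S1) := by
      rw [div_le_div_iff₀ hx0 (by norm_num : (0:ℝ) < 1 + 0 * S1)]
      nlinarith
    have h5 : -l1 * (S1 / (1 + x * S1)) ≤ -l1 * (S1 / (1 + 0 * S1)) :=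
      mul_le_mul_of_nonneg_left hmono (by linarith)
    have h3 : m2 * (y - T) ≤ 0 := by nlinarith
    linarith [e1, hR1, h5, h3]

set_option maxHeartbeats 1000000 in
private lemma max_int (S1 S2 T a b : ℝ) (hS1 : 0 < S1) (hS2 : 0 < S2) (hT : 0 < T)
    (ha : 0 < a) (hb : 0 < b)
    (h1 : b * S2 < a * S1 * (1 + T * S2)) (h2 : a * S1 < b * S2 * (1 + T * S1)) :
    0 < (a * S1 - b * S2) / (S1 * S2 * (a + b)) + a * T / (a + b) ∧
    (a * S1 - b * S2) / (S1 * S2 * (a + b)) + a * T / (a + b) < T ∧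
    ∀ x y : ℝ, 0 ≤ x → 0 ≤ y → x + y ≤ T →
      (x, y) ≠ ((a * S1 - b * S2) / (S1 * S2 * (a + b)) + a * T / (a + b),
        T - ((a * S1 - b * S2) / (S1 * S2 * (a + b)) + a * T / (a + b))) →
      -(a ^ 2) * (S1 / (1 + x * S1)) - b ^ 2 * (S2 / (1 + y * S2)) <
        -(a ^ 2) * (S1 / (1 + ((a * S1 - b * S2) / (S1 * S2 * (a + b)) + a * T / (a + b)) * S1))
          - b ^ 2 * (S2 / (1 + (T - ((a * S1 - b * S2) / (S1 * S2 * (a + b)) + a * T / (a + b))) * S2)) := by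
  have hab : 0 < a + b := by linarith
  set t1 : ℝ := (a * S1 - b * S2) / (S1 * S2 * (a + b)) + a * T / (a + b) with ht1def
  have hden : (0:ℝ) < S1 * S2 * (a + b) := by positivity
  have ht1eq : t1 = (a * S1 * (1 + S2 * T) - b * S2) / (S1 * S2 * (a + b)) := by
    rw [ht1def]
    field_simp
    ring
  have ht1pos : 0 < t1 := by
    rw [ht1eq]
    apply div_pos _ hden
    nlinarith
  have ht1ltT : t1 < T := by
    have : T - t1 = (b * S2 * (1 + S1 * T) - a * S1) / (S1 * S2 * (a + b)) := by
      rw [ht1def]; field_simp; ring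
    have hp : 0 < T - t1 := by
      rw [this]
      exact div_pos (by nlinarith) hden
    linarith
  refine ⟨ht1pos, ht1ltT, ?_⟩
  intro x y hx hy hxy hne
  set D : ℝ := S1 + S2 + S1 * S2 * T with hD
  have hDpos : 0 < D := by rw [hD]; positivity
  have he1 : 1 + t1 * S1 = a * D / (S2 * (a + b)) := by
    rw [ht1def, hD]; field_simp; ring
  have he2 : 1 + (T - t1) * S2 = b * D / (S1 * (a + b)) := by
    rw [ht1def, hD]; field_simp; ring
  have ht1S : (0:ℝ) < 1 + t1 * S1 := by nlinarith
  have ht2S : (0:ℝ) < 1 + (T - t1) * S2 := by nlinarith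
  have hx0 : (0:ℝ) < 1 + x * S1 := by nlinarith
  have hy0 : (0:ℝ) < 1 + y * S2 := by nlinarith
  set m : ℝ := (S1 * S2 * (a + b) / D) ^ 2 with hm
  have hmpos : 0 < m := by rw [hm]; positivity
  have hm1 : a ^ 2 * (S1 ^ 2 / (1 + t1 * S1) ^ 2) = m := by
    rw [he1, hm]
    field_simp
  have hm2 : b ^ 2 * (S2 ^ 2 / (1 + (T - t1) * S2) ^ 2) = m := by
    rw [he2, hm]
    field_simp
  have e1 := tangent_id S1 (a ^ 2) t1 x hS1 ht1pos.le hx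
  have e2 := tangent_id S2 (b ^ 2) (T - t1) y hS2 (by linarith) hy
  have hR1 : 0 ≤ a ^ 2 * (S1 ^ 3 * (x - t1) ^ 2 / ((1 + t1 * S1) ^ 2 * (1 + x * S1))) := by
    positivity
  have hR2 : 0 ≤ b ^ 2 * (S2 ^ 3 * (y - (T - t1)) ^ 2 / ((1 + (T - t1) * S2) ^ 2 * (1 + y * S2))) := by
    positivity
  have hlin : m * (x - t1) + m * (y - (T - t1)) ≤ 0 := by nlinarith
  have hstrict : 0 < a ^ 2 * (S1 ^ 3 * (x - t1) ^ 2 / ((1 + t1 * S1) ^ 2 * (1 + x * S1)))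
      + b ^ 2 * (S2 ^ 3 * (y - (T - t1)) ^ 2 / ((1 + (T - t1) * S2) ^ 2 * (1 + y * S2))) := by
    rcases (by
      by_contra h
      push_neg at h
      exact hne (Prod.ext h.1 h.2) : x ≠ t1 ∨ y ≠ T - t1) with hcase | hcase
    · have hq : 0 < (x - t1) ^ 2 := pow_two_pos_of_ne_zero (sub_ne_zero.2 hcase)
      have : 0 < a ^ 2 * (S1 ^ 3 * (x - t1) ^ 2 / ((1 + t1 * S1) ^ 2 * (1 + x * S1))) :=
        mul_pos (by positivity) (div_pos (mul_pos (pow_pos hS1 3) hq) (by positivity))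
      linarith [hR2]
    · have hq : 0 < (y - (T - t1)) ^ 2 := pow_two_pos_of_ne_zero (sub_ne_zero.2 hcase)
      have : 0 < b ^ 2 * (S2 ^ 3 * (y - (T - t1)) ^ 2 / ((1 + (T - t1) * S2) ^ 2 * (1 + y * S2))) :=
        mul_pos (by positivity) (div_pos (mul_pos (pow_pos hS2 3) hq) (by positivity))
      linarith [hR1]
  have key1 : a ^ 2 * (S1 ^ 2 / (1 + t1 * S1) ^ 2) * (x - t1) = m * (x - t1) := by rw [hm1]
  have key2 : b ^ 2 * (S2 ^ 2 / (1 + (T - t1) * S2) ^ 2) * (y - (T - t1)) = m * (y - (T - t1)) := by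
    rw [hm2]
  linarith [e1, e2, hlin, hstrict, key1, key2]


private lemma aux_pos1 (A c γ γ' : ℝ) (hc : 0 < c) (h : γ ≤ γ') (h2 : c * γ' < A) :
    0 < A - c * γ := by nlinarith

private lemma aux_pos2 (B c γ γ' : ℝ) (hc : 0 < c) (h : γ' ≤ γ) (h2 : -B < c * γ') :
    0 < B + c * γ := by nlinarith

private lemma anti_aux (S1 S2 T a b a' b' : ℝ) (hS1 : 0 < S1) (hS2 : 0 < S2) (hT : 0 < T)
    (ha : 0 < a) (hb : 0 < b) (ha' : 0 < a') (hb' : 0 < b')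
    (hdec : a' < a) (hinc : b < b') :
    (a' * S1 * (1 + S2 * T) - b' * S2) * (S1 * S2 * (a + b)) <
      (a * S1 * (1 + S2 * T) - b * S2) * (S1 * S2 * (a' + b')) := by
  have hcross : a' * b < a * b' := by nlinarith [mul_pos ha (sub_pos.2 hinc), mul_pos (sub_pos.2 hdec) hb]
  nlinarith [mul_pos (mul_pos (mul_pos hS1 hS2)
    (by positivity : (0:ℝ) < S1 * (1 + S2 * T) + S2)) (sub_pos.2 hcross)]

set_option maxHeartbeats 4000000 in
/-- Characterization of the equilibrium test allocation for a
sensitive analyst (`β > 1/2`), Lemma 4 of the paper. -/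
theorem stmt_5
    (S1 S2 T aD1 aD2 β : ℝ)
    (hS1 : 0 < S1) (hS2 : 0 < S2) (hT : 0 < T)
    (hD1 : 0 < aD1) (hD2 : 0 < aD2)
    (hβ : 1 / 2 < β) :
    let ahat1 : ℝ → ℝ := fun γ => Real.sqrt (max (lam1 aD1 aD2 β γ) 0)
    let ahat2 : ℝ → ℝ := fun γ => Real.sqrt (max (lam2 aD1 aD2 β γ) 0)
    let τt1 : ℝ → ℝ := fun γ =>
      (ahat1 γ * S1 - ahat2 γ * S2) / (S1 * S2 * (ahat1 γ + ahat2 γ))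
        + ahat1 γ * T / (ahat1 γ + ahat2 γ)
    ∃ γI ∈ interior (Gam aD1 aD2 β), ∃ γII ∈ interior (Gam aD1 aD2 β),
      γI < γII ∧
      (∀ γ ∈ Gam aD1 aD2 β,
        (γ ≤ γI → IsEqAlloc S1 S2 T aD1 aD2 β γ (T, 0) ∧
          ∀ τ, IsEqAlloc S1 S2 T aD1 aD2 β γ τ → τ = (T, 0)) ∧
        (γI < γ → γ < γII →
          0 < ahat1 γ + ahat2 γ ∧
          IsEqAlloc S1 S2 T aD1 aD2 β γ (τt1 γ, T - τt1 γ) ∧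
          ∀ τ, IsEqAlloc S1 S2 T aD1 aD2 β γ τ → τ = (τt1 γ, T - τt1 γ)) ∧
        (γII ≤ γ → IsEqAlloc S1 S2 T aD1 aD2 β γ (0, T) ∧
          ∀ τ, IsEqAlloc S1 S2 T aD1 aD2 β γ τ → τ = (0, T))) ∧
      StrictAntiOn τt1 (Set.Ioo γI γII) := by
  intro ahat1 ahat2 τt1
  have hahat1 : ∀ γ, ahat1 γ = Real.sqrt (max (lam1 aD1 aD2 β γ) 0) := fun _ => rfl
  have hahat2 : ∀ γ, ahat2 γ = Real.sqrt (max (lam2 aD1 aD2 β γ) 0) := fun _ => rfl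
  have hτt1 : ∀ γ, τt1 γ =
      (ahat1 γ * S1 - ahat2 γ * S2) / (S1 * S2 * (ahat1 γ + ahat2 γ))
        + ahat1 γ * T / (ahat1 γ + ahat2 γ) := fun _ => rfl
  clear_value ahat1 ahat2 τt1
  obtain ⟨A, hA⟩ : ∃ A : ℝ, A = (2 * β - 1) * aD1 ^ 2 := ⟨_, rfl⟩
  obtain ⟨B, hB⟩ : ∃ B : ℝ, B = (2 * β - 1) * aD2 ^ 2 := ⟨_, rfl⟩
  obtain ⟨c, hc⟩ : ∃ c : ℝ, c = 2 * aD1 * aD2 := ⟨_, rfl⟩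
  obtain ⟨p, hp⟩ : ∃ p : ℝ, p = S1 ^ 2 := ⟨_, rfl⟩
  obtain ⟨q, hq⟩ : ∃ q : ℝ, q = S2 ^ 2 * (1 + T * S1) ^ 2 := ⟨_, rfl⟩
  obtain ⟨p', hp'⟩ : ∃ p' : ℝ, p' = S1 ^ 2 * (1 + T * S2) ^ 2 := ⟨_, rfl⟩
  obtain ⟨q', hq'⟩ : ∃ q' : ℝ, q' = S2 ^ 2 := ⟨_, rfl⟩
  have hβ' : 0 < 2 * β - 1 := by linarith
  have hApos : 0 < A := by rw [hA]; nlinarith [pow_pos hD1 2]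
  have hBpos : 0 < B := by rw [hB]; nlinarith [pow_pos hD2 2]
  have hcpos : 0 < c := by rw [hc]; positivity
  have hppos : 0 < p := by rw [hp]; positivity
  have hqpos : 0 < q := by rw [hq]; positivity
  have hp'pos : 0 < p' := by rw [hp']; positivity
  have hq'pos : 0 < q' := by rw [hq']; positivity
  have hlam1 : ∀ γ : ℝ, lam1 aD1 aD2 β γ = A - c * γ := by
    intro γ; rw [hA, hc]; simp only [lam1]; ring
  have hlam2 : ∀ γ : ℝ, lam2 aD1 aD2 β γ = B + c * γ := by
    intro γ; rw [hB, hc]; simp only [lam2]; ring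
  obtain ⟨γI, hγI⟩ : ∃ x : ℝ, x = (A * p - B * q) / (c * (p + q)) := ⟨_, rfl⟩
  obtain ⟨γII, hγII⟩ : ∃ x : ℝ, x = (A * p' - B * q') / (c * (p' + q')) := ⟨_, rfl⟩
  have hI : c * (p + q) * γI = A * p - B * q := by
    rw [hγI]; field_simp
  have hII : c * (p' + q') * γII = A * p' - B * q' := by
    rw [hγII]; field_simp
  have hpq : 0 < p' * q - p * q' := by
    rw [hp, hq, hp', hq']
    have e1 : 1 < (1 + T * S1) ^ 2 := by nlinarith [mul_pos hT hS1]
    have e2 : 1 < (1 + T * S2) ^ 2 := by nlinarith [mul_pos hT hS2]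
    have e3 : 1 < (1 + T * S2) ^ 2 * (1 + T * S1) ^ 2 := by nlinarith
    nlinarith [mul_pos (mul_pos (pow_pos hS1 2) (pow_pos hS2 2)) (sub_pos.2 e3)]
  have hIltII : γI < γII := by
    have hkey : c * (p + q) * (p' + q') * (γII - γI) = (A + B) * (p' * q - p * q') := by
      linear_combination (p + q) * hII - (p' + q') * hI
    by_contra hcon
    push_neg at hcon
    nlinarith [mul_pos (mul_pos hcpos (by linarith : (0:ℝ) < p + q)) (by linarith : (0:ℝ) < p' + q'),
      mul_pos hApos hqpos]
  have hBI : -B < c * γI := by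
    have e : (B + c * γI) * (p + q) = (A + B) * p := by linear_combination hI
    nlinarith [mul_pos (by linarith : (0:ℝ) < A + B) hppos]
  have hIIA : c * γII < A := by
    have e : (A - c * γII) * (p' + q') = (A + B) * q' := by linear_combination -hII
    nlinarith [mul_pos (by linarith : (0:ℝ) < A + B) hq'pos]
  have hIA : c * γI < A := by nlinarith
  have hBII : -B < c * γII := by nlinarith
  have hintGam : interior (Gam aD1 aD2 β) = Set.Ioo (-(β * aD2 / aD1)) (β * aD1 / aD2) := by
    rw [Gam, interior_Icc]
  have hloB : -(β * aD2 / aD1) * c < -B := by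
    have h1 : -(β * aD2 / aD1) * c = -(2 * β) * aD2 ^ 2 := by rw [hc]; field_simp
    rw [h1, hB]; nlinarith [pow_pos hD2 2]
  have hAhi : A < β * aD1 / aD2 * c := by
    have h1 : β * aD1 / aD2 * c = 2 * β * aD1 ^ 2 := by rw [hc]; field_simp
    rw [hA, h1]; nlinarith [pow_pos hD1 2]
  have hlo_I : -(β * aD2 / aD1) < γI := by nlinarith
  have hI_hi : γI < β * aD1 / aD2 := by nlinarith
  have hlo_II : -(β * aD2 / aD1) < γII := by nlinarith
  have hII_hi : γII < β * aD1 / aD2 := by nlinarith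
  -- facts on the open middle interval
  have hmid : ∀ γ : ℝ, γI < γ → γ < γII →
      0 < ahat1 γ ∧ 0 < ahat2 γ ∧ ahat1 γ ^ 2 = lam1 aD1 aD2 β γ ∧
        ahat2 γ ^ 2 = lam2 aD1 aD2 β γ := by
    intro γ hγ1 hγ2
    have hl1pos : 0 < lam1 aD1 aD2 β γ := by
      rw [hlam1]; exact aux_pos1 A c γ γII hcpos hγ2.le hIIA
    have hl2pos : 0 < lam2 aD1 aD2 β γ := by
      rw [hlam2]; exact aux_pos2 B c γ γI hcpos hγ1.le hBI
    refine ⟨?_, ?_, ?_, ?_⟩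
    · rw [hahat1]; exact Real.sqrt_pos.2 (lt_max_of_lt_left hl1pos)
    · rw [hahat2]; exact Real.sqrt_pos.2 (lt_max_of_lt_left hl2pos)
    · rw [hahat1, max_eq_left hl1pos.le, Real.sq_sqrt hl1pos.le]
    · rw [hahat2, max_eq_left hl2pos.le, Real.sq_sqrt hl2pos.le]
  refine ⟨γI, by rw [hintGam]; exact ⟨hlo_I, hI_hi⟩, γII, by rw [hintGam]; exact ⟨hlo_II, hII_hi⟩,
    hIltII, ?_, ?_⟩
  · -- the three regimes
    intro γ _
    have hnb : ¬(lam1 aD1 aD2 β γ ≤ 0 ∧ lam2 aD1 aD2 β γ ≤ 0) := by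
      rw [hlam1, hlam2]
      rintro ⟨u, v⟩
      linarith
    refine ⟨?_, ?_, ?_⟩
    · -- γ ≤ γI : optimum (T,0)
      intro hγle
      have hl1pos : 0 < lam1 aD1 aD2 β γ := by
        rw [hlam1]; exact aux_pos1 A c γ γI hcpos hγle hIA
      have hkey : lam1 aD1 aD2 β γ * p - lam2 aD1 aD2 β γ * q = c * (p + q) * (γI - γ) := by
        rw [hlam1, hlam2]
        linear_combination -hI
      have hle : lam2 aD1 aD2 β γ * (S2 ^ 2 * (1 + T * S1) ^ 2) ≤ lam1 aD1 aD2 β γ * S1 ^ 2 := by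
        rw [← hq, ← hp]
        have hprod : 0 ≤ c * (p + q) * (γI - γ) :=
          mul_nonneg (mul_nonneg hcpos.le (by linarith)) (sub_nonneg.2 hγle)
        linarith [hkey, hprod]
      have hstrict : ∀ τ' ∈ Talloc T, τ' ≠ ((T:ℝ), (0:ℝ)) →
          Gfun S1 S2 aD1 aD2 β γ τ' < Gfun S1 S2 aD1 aD2 β γ (T, 0) := by
        rintro ⟨x, y⟩ ⟨hx, hy, hxy⟩ hne
        have h := max_T0 S1 S2 T _ _ hS1 hS2 hT hl1pos hle x y hx hy hxy hne
        simpa [Gfun] using h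
      have hmemT0 : ((T:ℝ), (0:ℝ)) ∈ Talloc T := ⟨hT.le, le_rfl, by simp⟩
      have hEq : IsEqAlloc S1 S2 T aD1 aD2 β γ (T, 0) := by
        refine Or.inr ⟨hnb, hmemT0, fun τ' hτ' => ?_⟩
        by_cases h : τ' = ((T:ℝ), (0:ℝ))
        · rw [h]
        · exact (hstrict τ' hτ' h).le
      refine ⟨hEq, fun τ hτ => ?_⟩
      rcases hτ with ⟨h1, h2, _⟩ | ⟨_, hmem, hmax⟩
      · exfalso; rw [hlam1] at h1; rw [hlam2] at h2; linarith
      · by_contra hne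
        exact absurd (hmax _ hmemT0) (not_le.2 (hstrict τ hmem hne))
    · -- γI < γ < γII : interior optimum
      intro hγ1 hγ2
      obtain ⟨ha, hb, ha2, hb2⟩ := hmid γ hγ1 hγ2
      have hab : 0 < ahat1 γ + ahat2 γ := by linarith
      have hkey1 : lam1 aD1 aD2 β γ * p' - lam2 aD1 aD2 β γ * q' = c * (p' + q') * (γII - γ) := by
        rw [hlam1, hlam2]
        linear_combination -hII
      have hkey2 : lam1 aD1 aD2 β γ * p - lam2 aD1 aD2 β γ * q = c * (p + q) * (γI - γ) := by
        rw [hlam1, hlam2]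
        linear_combination -hI
      have hcond1 : ahat2 γ * S2 < ahat1 γ * S1 * (1 + T * S2) := by
        apply lt_of_sq_lt' _ _ (by positivity) (by positivity)
        have e1 : (ahat2 γ * S2) ^ 2 = lam2 aD1 aD2 β γ * q' := by
          rw [mul_pow, hb2, hq']
        have e2 : (ahat1 γ * S1 * (1 + T * S2)) ^ 2 = lam1 aD1 aD2 β γ * p' := by
          rw [mul_pow, mul_pow, ha2, hp']; ring
        rw [e1, e2]
        have hprod : 0 < c * (p' + q') * (γII - γ) :=
          mul_pos (mul_pos hcpos (by linarith)) (sub_pos.2 hγ2)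
        linarith [hkey1, hprod]
      have hcond2 : ahat1 γ * S1 < ahat2 γ * S2 * (1 + T * S1) := by
        apply lt_of_sq_lt' _ _ (by positivity) (by positivity)
        have e1 : (ahat1 γ * S1) ^ 2 = lam1 aD1 aD2 β γ * p := by
          rw [mul_pow, ha2, hp]
        have e2 : (ahat2 γ * S2 * (1 + T * S1)) ^ 2 = lam2 aD1 aD2 β γ * q := by
          rw [mul_pow, mul_pow, hb2, hq]; ring
        rw [e1, e2]
        have hprod : 0 < c * (p + q) * (γ - γI) :=
          mul_pos (mul_pos hcpos (by linarith)) (sub_pos.2 hγ1)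
        have hkey2' : lam2 aD1 aD2 β γ * q - lam1 aD1 aD2 β γ * p = c * (p + q) * (γ - γI) := by
          rw [hlam1, hlam2]
          linear_combination hI
        linarith [hkey2', hprod]
      obtain ⟨hpos, hlt, hsm⟩ :=
        max_int S1 S2 T (ahat1 γ) (ahat2 γ) hS1 hS2 hT ha hb hcond1 hcond2
      rw [← hτt1 γ] at hpos hlt hsm
      have hstrict : ∀ τ' ∈ Talloc T, τ' ≠ (τt1 γ, T - τt1 γ) →
          Gfun S1 S2 aD1 aD2 β γ τ' < Gfun S1 S2 aD1 aD2 β γ (τt1 γ, T - τt1 γ) := by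
        rintro ⟨x, y⟩ ⟨hx, hy, hxy⟩ hne
        have h := hsm x y hx hy hxy hne
        rw [ha2, hb2] at h
        simpa [Gfun] using h
      have hmem0 : (τt1 γ, T - τt1 γ) ∈ Talloc T :=
        ⟨hpos.le, by simp only; linarith, by simp only; linarith⟩
      have hEq : IsEqAlloc S1 S2 T aD1 aD2 β γ (τt1 γ, T - τt1 γ) := by
        refine Or.inr ⟨hnb, hmem0, fun τ' hτ' => ?_⟩
        by_cases h : τ' = (τt1 γ, T - τt1 γ)
        · rw [h]
        · exact (hstrict τ' hτ' h).le
      refine ⟨hab, hEq, fun τ hτ => ?_⟩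
      rcases hτ with ⟨h1, h2, _⟩ | ⟨_, hmem, hmax⟩
      · exfalso; rw [hlam1] at h1; rw [hlam2] at h2; linarith
      · by_contra hne
        exact absurd (hmax _ hmem0) (not_le.2 (hstrict τ hmem hne))
    · -- γII ≤ γ : optimum (0,T)
      intro hγge
      have hl2pos : 0 < lam2 aD1 aD2 β γ := by
        rw [hlam2]; exact aux_pos2 B c γ γII hcpos hγge hBII
      have hkey : lam1 aD1 aD2 β γ * p' - lam2 aD1 aD2 β γ * q' = c * (p' + q') * (γII - γ) := by
        rw [hlam1, hlam2]
        linear_combination -hII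
      have hle : lam1 aD1 aD2 β γ * (S1 ^ 2 * (1 + T * S2) ^ 2) ≤ lam2 aD1 aD2 β γ * S2 ^ 2 := by
        rw [← hp', ← hq']
        have hprod : 0 ≤ c * (p' + q') * (γ - γII) :=
          mul_nonneg (mul_nonneg hcpos.le (by linarith)) (sub_nonneg.2 hγge)
        have hkey' : lam2 aD1 aD2 β γ * q' - lam1 aD1 aD2 β γ * p' = c * (p' + q') * (γ - γII) := by
          rw [hlam1, hlam2]
          linear_combination hII
        linarith [hkey', hprod]
      have hstrict : ∀ τ' ∈ Talloc T, τ' ≠ ((0:ℝ), (T:ℝ)) →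
          Gfun S1 S2 aD1 aD2 β γ τ' < Gfun S1 S2 aD1 aD2 β γ (0, T) := by
        rintro ⟨x, y⟩ ⟨hx, hy, hxy⟩ hne
        have h := max_0T S1 S2 T _ _ hS1 hS2 hT hl2pos hle x y hx hy hxy hne
        simpa [Gfun] using h
      have hmem0T : ((0:ℝ), (T:ℝ)) ∈ Talloc T := ⟨le_rfl, hT.le, by simp⟩
      have hEq : IsEqAlloc S1 S2 T aD1 aD2 β γ (0, T) := by
        refine Or.inr ⟨hnb, hmem0T, fun τ' hτ' => ?_⟩
        by_cases h : τ' = ((0:ℝ), (T:ℝ))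
        · rw [h]
        · exact (hstrict τ' hτ' h).le
      refine ⟨hEq, fun τ hτ => ?_⟩
      rcases hτ with ⟨h1, h2, _⟩ | ⟨_, hmem, hmax⟩
      · exfalso; rw [hlam1] at h1; rw [hlam2] at h2; linarith
      · by_contra hne
        exact absurd (hmax _ hmem0T) (not_le.2 (hstrict τ hmem hne))
  · -- strict monotonicity of τt1 on (γI, γII)
    intro γa hγa γb hγb hab
    obtain ⟨haa, hba, haa2, hba2⟩ := hmid γa hγa.1 hγa.2
    obtain ⟨hab', hbb, hab2, hbb2⟩ := hmid γb hγb.1 hγb.2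
    -- ahat1 decreasing, ahat2 increasing
    have hl1a : 0 < lam1 aD1 aD2 β γa := by rw [← haa2]; positivity
    have hl1b : 0 < lam1 aD1 aD2 β γb := by rw [← hab2]; positivity
    have hl2a : 0 < lam2 aD1 aD2 β γa := by rw [← hba2]; positivity
    have hl2b : 0 < lam2 aD1 aD2 β γb := by rw [← hbb2]; positivity
    have hdec : ahat1 γb < ahat1 γa := by
      rw [hahat1, hahat1, max_eq_left hl1b.le, max_eq_left hl1a.le]
      apply Real.sqrt_lt_sqrt hl1b.le
      rw [hlam1, hlam1]
      have := mul_lt_mul_of_pos_left hab hcpos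
      linarith
    have hinc : ahat2 γa < ahat2 γb := by
      rw [hahat2, hahat2, max_eq_left hl2a.le, max_eq_left hl2b.le]
      apply Real.sqrt_lt_sqrt hl2a.le
      rw [hlam2, hlam2]
      have := mul_lt_mul_of_pos_left hab hcpos
      linarith
    have hsa : 0 < ahat1 γa + ahat2 γa := by linarith
    have hsb : 0 < ahat1 γb + ahat2 γb := by linarith
    have ega : τt1 γa = (ahat1 γa * S1 * (1 + S2 * T) - ahat2 γa * S2)
        / (S1 * S2 * (ahat1 γa + ahat2 γa)) := by
      rw [hτt1]
      field_simp
      ring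
    have egb : τt1 γb = (ahat1 γb * S1 * (1 + S2 * T) - ahat2 γb * S2)
        / (S1 * S2 * (ahat1 γb + ahat2 γb)) := by
      rw [hτt1]
      field_simp
      ring
    rw [ega, egb, div_lt_div_iff₀ (by positivity) (by positivity)]
    exact anti_aux S1 S2 T (ahat1 γa) (ahat2 γa) (ahat1 γb) (ahat2 γb)
      hS1 hS2 hT haa hba hab' hbb hdec hinc
end
end

section
/- In the organization setting with α^D₁ ≥ α^D₂ > 0, fix a sensitivity level β ∈ [0, 1/2]. Then the manager's expected equilibrium payoff weakly increases as the analyst becomes more distorted: for any γ, γ' ∈ Γ(β) with either 0 ≤ γ ≤ γ' or γ' ≤ γ ≤ 0, one has V^D(τ*(β, γ')) ≥ V^D(τ*(β, γ)). -/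
noncomputable section

section Aux

variable {S1 S2 T aD1 aD2 β γ : ℝ}

/-- If `λ₁ ≤ 0 < λ₂`, any maximizer is `(0, T)`. -/
lemma eq_alloc_snd (hS1 : 0 < S1) (hS2 : 0 < S2) (hT : 0 < T)
    (hl1 : lam1 aD1 aD2 β γ ≤ 0) (hl2 : 0 < lam2 aD1 aD2 β γ)
    (τ : ℝ × ℝ) (hmem : τ ∈ Talloc T)
    (hmax : ∀ τ' ∈ Talloc T, Gfun S1 S2 aD1 aD2 β γ τ' ≤ Gfun S1 S2 aD1 aD2 β γ τ) :
    τ = (0, T) := by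
  obtain ⟨h1, h2, h3⟩ := hmem
  have hOT : ((0 : ℝ), T) ∈ Talloc T := ⟨le_refl 0, hT.le, by simp⟩
  have hG := hmax (0, T) hOT
  simp only [Gfun] at hG
  norm_num at hG
  have d1 : 0 < 1 + τ.1 * S1 := by nlinarith
  have d2 : 0 < 1 + τ.2 * S2 := by nlinarith
  have dT : 0 < 1 + T * S2 := by nlinarith
  have hs1 : S1 / (1 + τ.1 * S1) ≤ S1 := by
    rw [div_le_iff₀ d1]; nlinarith [mul_nonneg (mul_nonneg h1 hS1.le) hS1.le]
  have hprod : 0 ≤ -(lam1 aD1 aD2 β γ) * (S1 - S1 / (1 + τ.1 * S1)) := by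
    have := sub_nonneg.mpr hs1
    nlinarith
  have key : lam2 aD1 aD2 β γ * (S2 / (1 + τ.2 * S2)) ≤
      lam2 aD1 aD2 β γ * (S2 / (1 + T * S2)) := by nlinarith
  have hyz : S2 / (1 + τ.2 * S2) ≤ S2 / (1 + T * S2) :=
    le_of_mul_le_mul_left key hl2
  have h2T : τ.2 = T := by
    by_contra hne
    have hlt : τ.2 < T := lt_of_le_of_ne (by linarith) hne
    have : S2 / (1 + T * S2) < S2 / (1 + τ.2 * S2) := by
      rw [div_lt_div_iff₀ dT d2]
      nlinarith [mul_pos (mul_pos hS2 hS2) (sub_pos.mpr hlt)]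
    linarith
  have h1z : τ.1 = 0 := by linarith [h3, h2T]
  exact Prod.ext h1z h2T

/-- If `λ₂ ≤ 0 < λ₁`, any maximizer is `(T, 0)`. -/
lemma eq_alloc_fst (hS1 : 0 < S1) (hS2 : 0 < S2) (hT : 0 < T)
    (hl2 : lam2 aD1 aD2 β γ ≤ 0) (hl1 : 0 < lam1 aD1 aD2 β γ)
    (τ : ℝ × ℝ) (hmem : τ ∈ Talloc T)
    (hmax : ∀ τ' ∈ Talloc T, Gfun S1 S2 aD1 aD2 β γ τ' ≤ Gfun S1 S2 aD1 aD2 β γ τ) :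
    τ = (T, 0) := by
  obtain ⟨h1, h2, h3⟩ := hmem
  have hT0 : ((T : ℝ), (0:ℝ)) ∈ Talloc T := ⟨hT.le, le_refl 0, by simp⟩
  have hG := hmax (T, 0) hT0
  simp only [Gfun] at hG
  norm_num at hG
  have d1 : 0 < 1 + τ.1 * S1 := by nlinarith
  have d2 : 0 < 1 + τ.2 * S2 := by nlinarith
  have dT : 0 < 1 + T * S1 := by nlinarith
  have hs2 : S2 / (1 + τ.2 * S2) ≤ S2 := by
    rw [div_le_iff₀ d2]; nlinarith [mul_nonneg (mul_nonneg h2 hS2.le) hS2.le]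
  have hprod : 0 ≤ -(lam2 aD1 aD2 β γ) * (S2 - S2 / (1 + τ.2 * S2)) := by
    have := sub_nonneg.mpr hs2
    nlinarith
  have key : lam1 aD1 aD2 β γ * (S1 / (1 + τ.1 * S1)) ≤
      lam1 aD1 aD2 β γ * (S1 / (1 + T * S1)) := by nlinarith
  have hyz : S1 / (1 + τ.1 * S1) ≤ S1 / (1 + T * S1) :=
    le_of_mul_le_mul_left key hl1
  have h1T : τ.1 = T := by
    by_contra hne
    have hlt : τ.1 < T := lt_of_le_of_ne (by linarith) hne
    have : S1 / (1 + T * S1) < S1 / (1 + τ.1 * S1) := by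
      rw [div_lt_div_iff₀ dT d1]
      nlinarith [mul_pos (mul_pos hS1 hS1) (sub_pos.mpr hlt)]
    linarith
  have h2z : τ.2 = 0 := by linarith [h3, h1T]
  exact Prod.ext h1T h2z

lemma vd_00_le_0T (hS1 : 0 < S1) (hS2 : 0 < S2) (hT : 0 < T) :
    VD S1 S2 aD1 aD2 (0, 0) ≤ VD S1 S2 aD1 aD2 (0, T) := by
  simp only [VD]
  norm_num
  have dT : 0 < 1 + T * S2 := by nlinarith
  have h : S2 / (1 + T * S2) ≤ S2 := by
    rw [div_le_iff₀ dT]; nlinarith [mul_nonneg (mul_nonneg hT.le hS2.le) hS2.le]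
  nlinarith [sq_nonneg aD2, mul_le_mul_of_nonneg_left h (sq_nonneg aD2)]

lemma vd_00_le_T0 (hS1 : 0 < S1) (hS2 : 0 < S2) (hT : 0 < T) :
    VD S1 S2 aD1 aD2 (0, 0) ≤ VD S1 S2 aD1 aD2 (T, 0) := by
  simp only [VD]
  norm_num
  have dT : 0 < 1 + T * S1 := by nlinarith
  have h : S1 / (1 + T * S1) ≤ S1 := by
    rw [div_le_iff₀ dT]; nlinarith [mul_nonneg (mul_nonneg hT.le hS1.le) hS1.le]
  nlinarith [sq_nonneg aD1, mul_le_mul_of_nonneg_left h (sq_nonneg aD1)]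

end Aux

/-- Proposition 2(i) of the paper.  For an insensitive analyst
(`β ≤ 1/2`), the manager's expected equilibrium payoff weakly increases as the
analyst becomes more distorted. -/
theorem stmt_7
    (S1 S2 T aD1 aD2 β : ℝ)
    (hS1 : 0 < S1) (hS2 : 0 < S2) (hT : 0 < T)
    (hD : aD2 ≤ aD1) (hD2 : 0 < aD2)
    (hβ : β ∈ Set.Icc (0 : ℝ) (1 / 2)) :
    ∀ γ ∈ Gam aD1 aD2 β, ∀ γ' ∈ Gam aD1 aD2 β,
      ((0 ≤ γ ∧ γ ≤ γ') ∨ (γ' ≤ γ ∧ γ ≤ 0)) →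
      ∀ τ τ', IsEqAlloc S1 S2 T aD1 aD2 β γ τ → IsEqAlloc S1 S2 T aD1 aD2 β γ' τ' →
        VD S1 S2 aD1 aD2 τ ≤ VD S1 S2 aD1 aD2 τ' := by
  have hD1 : 0 < aD1 := lt_of_lt_of_le hD2 hD
  have hβ1 : 2 * β - 1 ≤ 0 := by have := hβ.2; linarith
  intro γ _ γ' _ hord τ τ' hτ hτ'
  rcases hord with ⟨hγ0, hγγ'⟩ | ⟨hγ'γ, hγ0⟩
  · -- 0 ≤ γ ≤ γ' : λ₁ ≤ 0 for both, λ₂ increasing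
    have hγ'0 : 0 ≤ γ' := le_trans hγ0 hγγ'
    have hl1 : lam1 aD1 aD2 β γ ≤ 0 := by
      unfold lam1; nlinarith [sq_nonneg aD1, mul_nonneg (mul_nonneg hγ0 hD1.le) hD2.le]
    have hl1' : lam1 aD1 aD2 β γ' ≤ 0 := by
      unfold lam1; nlinarith [sq_nonneg aD1, mul_nonneg (mul_nonneg hγ'0 hD1.le) hD2.le]
    have hmono : lam2 aD1 aD2 β γ ≤ lam2 aD1 aD2 β γ' := by
      unfold lam2; nlinarith [mul_nonneg (mul_nonneg (sub_nonneg.mpr hγγ') hD1.le) hD2.le]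
    rcases hτ with ⟨_, _, rfl⟩ | ⟨hne, hmem, hmax⟩
    · rcases hτ' with ⟨_, _, rfl⟩ | ⟨hne', hmem', hmax'⟩
      · exact le_refl _
      · push_neg at hne'
        have hl2' : 0 < lam2 aD1 aD2 β γ' := hne' hl1'
        have hτ'eq : τ' = (0, T) := eq_alloc_snd hS1 hS2 hT hl1' hl2' τ' hmem' hmax'
        rw [hτ'eq]
        exact vd_00_le_0T hS1 hS2 hT
    · push_neg at hne
      have hl2 : 0 < lam2 aD1 aD2 β γ := hne hl1
      have hl2' : 0 < lam2 aD1 aD2 β γ' := lt_of_lt_of_le hl2 hmono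
      have hτeq : τ = (0, T) := eq_alloc_snd hS1 hS2 hT hl1 hl2 τ hmem hmax
      rcases hτ' with ⟨_, h2', _⟩ | ⟨hne', hmem', hmax'⟩
      · linarith
      · have hτ'eq : τ' = (0, T) := eq_alloc_snd hS1 hS2 hT hl1' hl2' τ' hmem' hmax'
        rw [hτeq, hτ'eq]
  · -- γ' ≤ γ ≤ 0 : λ₂ ≤ 0 for both, λ₁ increasing as γ decreases
    have hγ'0 : γ' ≤ 0 := le_trans hγ'γ hγ0
    have hl2 : lam2 aD1 aD2 β γ ≤ 0 := by
      unfold lam2; nlinarith [sq_nonneg aD2, mul_nonneg (mul_nonneg (neg_nonneg.mpr hγ0) hD1.le) hD2.le]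
    have hl2' : lam2 aD1 aD2 β γ' ≤ 0 := by
      unfold lam2; nlinarith [sq_nonneg aD2, mul_nonneg (mul_nonneg (neg_nonneg.mpr hγ'0) hD1.le) hD2.le]
    have hmono : lam1 aD1 aD2 β γ ≤ lam1 aD1 aD2 β γ' := by
      unfold lam1; nlinarith [mul_nonneg (mul_nonneg (sub_nonneg.mpr hγ'γ) hD1.le) hD2.le]
    rcases hτ with ⟨_, _, rfl⟩ | ⟨hne, hmem, hmax⟩
    · rcases hτ' with ⟨_, _, rfl⟩ | ⟨hne', hmem', hmax'⟩
      · exact le_refl _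
      · push_neg at hne'
        have hl1' : 0 < lam1 aD1 aD2 β γ' := by
          by_contra h
          push_neg at h
          exact absurd hl2' (not_le.mpr (hne' h))
        have hτ'eq : τ' = (T, 0) := eq_alloc_fst hS1 hS2 hT hl2' hl1' τ' hmem' hmax'
        rw [hτ'eq]
        exact vd_00_le_T0 hS1 hS2 hT
    · push_neg at hne
      have hl1 : 0 < lam1 aD1 aD2 β γ := by
        by_contra h
        push_neg at h
        exact absurd hl2 (not_le.mpr (hne h))
      have hl1' : 0 < lam1 aD1 aD2 β γ' := lt_of_lt_of_le hl1 hmono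
      have hτeq : τ = (T, 0) := eq_alloc_fst hS1 hS2 hT hl2 hl1 τ hmem hmax
      rcases hτ' with ⟨h1', _, _⟩ | ⟨hne', hmem', hmax'⟩
      · linarith
      · have hτ'eq : τ' = (T, 0) := eq_alloc_fst hS1 hS2 hT hl2' hl1' τ' hmem' hmax'
        rw [hτeq, hτ'eq]
end
end

section
/- In the organization setting with α^D₁, α^D₂ > 0, fix a sensitivity level β > 1/2. Then the manager's expected equilibrium payoff weakly decreases as the analyst becomes more distorted: for any γ, γ' ∈ Γ(β) with either 0 ≤ γ ≤ γ' or γ' ≤ γ ≤ 0, one has V^D(τ*(β, γ')) ≤ V^D(τ*(β, γ)). -/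
noncomputable section

private lemma f_anti (S a b : ℝ) (hS : 0 < S) (ha : 0 ≤ a) (hab : a ≤ b) :
    S / (1 + b * S) ≤ S / (1 + a * S) := by
  have h1 : (0:ℝ) < 1 + a * S := by nlinarith
  have h2 : (0:ℝ) < 1 + b * S := by nlinarith
  rw [div_le_div_iff₀ h2 h1]
  nlinarith [mul_nonneg (sub_nonneg.mpr hab) (mul_pos hS hS).le]

private lemma f_inj (S a b : ℝ) (hS : 0 < S) (ha : 0 ≤ a) (hb : 0 ≤ b)
    (h : S / (1 + a * S) = S / (1 + b * S)) : a = b := by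
  have h1 : (0:ℝ) < 1 + a * S := by nlinarith
  have h2 : (0:ℝ) < 1 + b * S := by nlinarith
  rw [div_eq_div_iff h1.ne' h2.ne'] at h
  have h3 : S ^ 2 * (b - a) = 0 := by linear_combination h
  have h4 : (S:ℝ) ^ 2 ≠ 0 := pow_ne_zero 2 hS.ne'
  have := (mul_eq_zero.mp h3).resolve_left h4
  linarith

private lemma midpt (S a b : ℝ) (hS : 0 < S) (ha : 0 ≤ a) (hb : 0 ≤ b) :
    S / (1 + a * S) + S / (1 + b * S) - 2 * (S / (1 + (a + b) / 2 * S))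
      = S ^ 3 * (a - b) ^ 2 / ((1 + a * S) * (1 + b * S) * (2 + (a + b) * S)) := by
  have h1 : (0:ℝ) < 1 + a * S := by nlinarith
  have h2 : (0:ℝ) < 1 + b * S := by nlinarith
  have h3 : (0:ℝ) < 1 + (a + b) / 2 * S := by nlinarith
  have h4 : (0:ℝ) < 2 + (a + b) * S := by nlinarith
  field_simp
  ring

private lemma max_corner2 (S1 S2 T l1 l2 : ℝ) (hS1 : 0 < S1) (hS2 : 0 < S2) (hT : 0 < T)
    (hl1 : l1 ≤ 0) (hl2 : 0 < l2) (τ : ℝ × ℝ) (hτ : τ ∈ Talloc T)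
    (hmax : ∀ σ ∈ Talloc T,
      -(l1) * (S1 / (1 + σ.1 * S1)) - l2 * (S2 / (1 + σ.2 * S2)) ≤
      -(l1) * (S1 / (1 + τ.1 * S1)) - l2 * (S2 / (1 + τ.2 * S2))) :
    τ = (0, T) := by
  obtain ⟨h1, h2, h3⟩ := hτ
  have hc : ((0:ℝ), T) ∈ Talloc T := by
    refine ⟨le_refl 0, hT.le, ?_⟩
    simp
  have hA := hmax (0, T) hc
  dsimp only at hA
  have hf1 : S1 / (1 + τ.1 * S1) ≤ S1 / (1 + 0 * S1) := f_anti S1 0 τ.1 hS1 le_rfl h1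
  have hf2 : S2 / (1 + T * S2) ≤ S2 / (1 + τ.2 * S2) := f_anti S2 τ.2 T hS2 h2 (by linarith)
  have hint : 0 ≤ (-l1) * (S1 / (1 + 0 * S1) - S1 / (1 + τ.1 * S1)) :=
    mul_nonneg (by linarith) (by linarith)
  have hle : l2 * (S2 / (1 + τ.2 * S2)) ≤ l2 * (S2 / (1 + T * S2)) := by nlinarith
  have hf2' : S2 / (1 + τ.2 * S2) ≤ S2 / (1 + T * S2) := le_of_mul_le_mul_left hle hl2
  have h2T : τ.2 = T := f_inj S2 τ.2 T hS2 h2 hT.le (le_antisymm hf2' hf2)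
  have h10 : τ.1 = 0 := le_antisymm (by linarith) h1
  exact Prod.ext h10 h2T

private lemma max_corner1 (S1 S2 T l1 l2 : ℝ) (hS1 : 0 < S1) (hS2 : 0 < S2) (hT : 0 < T)
    (hl1 : 0 < l1) (hl2 : l2 ≤ 0) (τ : ℝ × ℝ) (hτ : τ ∈ Talloc T)
    (hmax : ∀ σ ∈ Talloc T,
      -(l1) * (S1 / (1 + σ.1 * S1)) - l2 * (S2 / (1 + σ.2 * S2)) ≤
      -(l1) * (S1 / (1 + τ.1 * S1)) - l2 * (S2 / (1 + τ.2 * S2))) :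
    τ = (T, 0) := by
  obtain ⟨h1, h2, h3⟩ := hτ
  have hc : ((T:ℝ), 0) ∈ Talloc T := by
    refine ⟨hT.le, le_refl 0, ?_⟩
    simp
  have hA := hmax (T, 0) hc
  dsimp only at hA
  have hf2 : S2 / (1 + τ.2 * S2) ≤ S2 / (1 + 0 * S2) := f_anti S2 0 τ.2 hS2 le_rfl h2
  have hf1 : S1 / (1 + T * S1) ≤ S1 / (1 + τ.1 * S1) := f_anti S1 τ.1 T hS1 h1 (by linarith)
  have hint : 0 ≤ (-l2) * (S2 / (1 + 0 * S2) - S2 / (1 + τ.2 * S2)) :=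
    mul_nonneg (by linarith) (by linarith)
  have hle : l1 * (S1 / (1 + τ.1 * S1)) ≤ l1 * (S1 / (1 + T * S1)) := by nlinarith
  have hf1' : S1 / (1 + τ.1 * S1) ≤ S1 / (1 + T * S1) := le_of_mul_le_mul_left hle hl1
  have h1T : τ.1 = T := f_inj S1 τ.1 T hS1 h1 hT.le (le_antisymm hf1' hf1)
  have h20 : τ.2 = 0 := le_antisymm (by linarith) h2
  exact Prod.ext h1T h20

private lemma uniq_max (S1 S2 T l1 l2 : ℝ) (hS1 : 0 < S1) (hS2 : 0 < S2) (hT : 0 < T)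
    (hsum : 0 < l1 + l2) (τ τ' : ℝ × ℝ) (hτ : τ ∈ Talloc T) (hτ' : τ' ∈ Talloc T)
    (hmax : ∀ σ ∈ Talloc T,
      -(l1) * (S1 / (1 + σ.1 * S1)) - l2 * (S2 / (1 + σ.2 * S2)) ≤
      -(l1) * (S1 / (1 + τ.1 * S1)) - l2 * (S2 / (1 + τ.2 * S2)))
    (hmax' : ∀ σ ∈ Talloc T,
      -(l1) * (S1 / (1 + σ.1 * S1)) - l2 * (S2 / (1 + σ.2 * S2)) ≤
      -(l1) * (S1 / (1 + τ'.1 * S1)) - l2 * (S2 / (1 + τ'.2 * S2))) :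
    τ = τ' := by
  rcases le_or_gt l1 0 with hl1 | hl1
  · have hl2 : 0 < l2 := by linarith
    rw [max_corner2 S1 S2 T l1 l2 hS1 hS2 hT hl1 hl2 τ hτ hmax,
        max_corner2 S1 S2 T l1 l2 hS1 hS2 hT hl1 hl2 τ' hτ' hmax']
  rcases le_or_gt l2 0 with hl2 | hl2
  · rw [max_corner1 S1 S2 T l1 l2 hS1 hS2 hT hl1 hl2 τ hτ hmax,
        max_corner1 S1 S2 T l1 l2 hS1 hS2 hT hl1 hl2 τ' hτ' hmax']
  -- both positive: strict concavity / midpoint argument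
  obtain ⟨a1, a2, a3⟩ := hτ
  obtain ⟨b1, b2, b3⟩ := hτ'
  have hm : ((τ.1 + τ'.1) / 2, (τ.2 + τ'.2) / 2) ∈ Talloc T := by
    refine ⟨?_, ?_, ?_⟩ <;> dsimp only <;> linarith
  have hM := hmax _ hm
  have hM' := hmax' _ hm
  dsimp only at hM hM'
  have e1 := midpt S1 τ.1 τ'.1 hS1 a1 b1
  have e2 := midpt S2 τ.2 τ'.2 hS2 a2 b2
  have p1 : (0:ℝ) < 1 + τ.1 * S1 := by nlinarith
  have p1' : (0:ℝ) < 1 + τ'.1 * S1 := by nlinarith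
  have p1'' : (0:ℝ) < 2 + (τ.1 + τ'.1) * S1 := by nlinarith
  have p2 : (0:ℝ) < 1 + τ.2 * S2 := by nlinarith
  have p2' : (0:ℝ) < 1 + τ'.2 * S2 := by nlinarith
  have p2'' : (0:ℝ) < 2 + (τ.2 + τ'.2) * S2 := by nlinarith
  have D1pos : (0:ℝ) < (1 + τ.1 * S1) * (1 + τ'.1 * S1) * (2 + (τ.1 + τ'.1) * S1) :=
    mul_pos (mul_pos p1 p1') p1''
  have D2pos : (0:ℝ) < (1 + τ.2 * S2) * (1 + τ'.2 * S2) * (2 + (τ.2 + τ'.2) * S2) :=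
    mul_pos (mul_pos p2 p2') p2''
  set Q1 : ℝ := S1 ^ 3 * (τ.1 - τ'.1) ^ 2 /
      ((1 + τ.1 * S1) * (1 + τ'.1 * S1) * (2 + (τ.1 + τ'.1) * S1)) with hQ1def
  set Q2 : ℝ := S2 ^ 3 * (τ.2 - τ'.2) ^ 2 /
      ((1 + τ.2 * S2) * (1 + τ'.2 * S2) * (2 + (τ.2 + τ'.2) * S2)) with hQ2def
  have hQ1 : 0 ≤ Q1 := div_nonneg (by positivity) D1pos.le
  have hQ2 : 0 ≤ Q2 := div_nonneg (by positivity) D2pos.le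
  have t1 : l1 * (S1 / (1 + τ.1 * S1) + S1 / (1 + τ'.1 * S1)
      - 2 * (S1 / (1 + (τ.1 + τ'.1) / 2 * S1))) = l1 * Q1 := by rw [e1]
  have t2 : l2 * (S2 / (1 + τ.2 * S2) + S2 / (1 + τ'.2 * S2)
      - 2 * (S2 / (1 + (τ.2 + τ'.2) / 2 * S2))) = l2 * Q2 := by rw [e2]
  have key : l1 * Q1 + l2 * Q2 ≤ 0 := by linarith [hM, hM', t1, t2]
  have hz1 : Q1 ≤ 0 := by
    have h := mul_nonneg hl2.le hQ2
    have : l1 * Q1 ≤ l1 * 0 := by rw [mul_zero]; linarith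
    exact le_of_mul_le_mul_left this hl1
  have hz2 : Q2 ≤ 0 := by
    have h := mul_nonneg hl1.le hQ1
    have : l2 * Q2 ≤ l2 * 0 := by rw [mul_zero]; linarith
    exact le_of_mul_le_mul_left this hl2
  have hq1 : Q1 = 0 := le_antisymm hz1 hQ1
  have hq2 : Q2 = 0 := le_antisymm hz2 hQ2
  have hn1 : S1 ^ 3 * (τ.1 - τ'.1) ^ 2 = 0 := by
    rw [hQ1def, div_eq_zero_iff] at hq1
    exact hq1.resolve_right D1pos.ne'
  have hn2 : S2 ^ 3 * (τ.2 - τ'.2) ^ 2 = 0 := by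
    rw [hQ2def, div_eq_zero_iff] at hq2
    exact hq2.resolve_right D2pos.ne'
  have hd1 : (τ.1 - τ'.1) ^ 2 = 0 :=
    (mul_eq_zero.mp hn1).resolve_left (pow_ne_zero 3 hS1.ne')
  have hd2 : (τ.2 - τ'.2) ^ 2 = 0 :=
    (mul_eq_zero.mp hn2).resolve_left (pow_ne_zero 3 hS2.ne')
  have e1' : τ.1 = τ'.1 := sub_eq_zero.mp (pow_eq_zero_iff (two_ne_zero) |>.mp hd1)
  have e2' : τ.2 = τ'.2 := sub_eq_zero.mp (pow_eq_zero_iff (two_ne_zero) |>.mp hd2)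
  exact Prod.ext e1' e2'

/-- Proposition 2(ii) of the paper.  For a sensitive analyst
(`β > 1/2`), the manager's expected equilibrium payoff weakly decreases as the
analyst becomes more distorted. -/
theorem stmt_8
    (S1 S2 T aD1 aD2 β : ℝ)
    (hS1 : 0 < S1) (hS2 : 0 < S2) (hT : 0 < T)
    (hD1 : 0 < aD1) (hD2 : 0 < aD2)
    (hβ : 1 / 2 < β) :
    ∀ γ ∈ Gam aD1 aD2 β, ∀ γ' ∈ Gam aD1 aD2 β,
      ((0 ≤ γ ∧ γ ≤ γ') ∨ (γ' ≤ γ ∧ γ ≤ 0)) →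
      ∀ τ τ', IsEqAlloc S1 S2 T aD1 aD2 β γ τ → IsEqAlloc S1 S2 T aD1 aD2 β γ' τ' →
        VD S1 S2 aD1 aD2 τ' ≤ VD S1 S2 aD1 aD2 τ := by
  intro γ hγ γ' hγ' hord τ τ' hτ hτ'
  have hb : 0 < 2 * β - 1 := by linarith
  have hsum : ∀ g : ℝ, 0 < lam1 aD1 aD2 β g + lam2 aD1 aD2 β g := by
    intro g
    simp only [lam1, lam2]
    nlinarith [pow_pos hD1 2, pow_pos hD2 2]
  have getmax : ∀ (g : ℝ) (τ₀ : ℝ × ℝ), IsEqAlloc S1 S2 T aD1 aD2 β g τ₀ →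
      τ₀ ∈ Talloc T ∧
      ∀ σ ∈ Talloc T, Gfun S1 S2 aD1 aD2 β g σ ≤ Gfun S1 S2 aD1 aD2 β g τ₀ := by
    intro g τ₀ h
    rcases h with ⟨h1, h2, _⟩ | ⟨_, hm, hx⟩
    · exfalso; linarith [hsum g]
    · exact ⟨hm, hx⟩
  obtain ⟨hmem, hmax⟩ := getmax γ τ hτ
  obtain ⟨hmem', hmax'⟩ := getmax γ' τ' hτ'
  rcases eq_or_ne γ γ' with rfl | hne
  · have heq : τ = τ' := by
      apply uniq_max S1 S2 T (lam1 aD1 aD2 β γ) (lam2 aD1 aD2 β γ) hS1 hS2 hT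
        (hsum γ) τ τ' hmem hmem'
      · intro σ hσ
        have := hmax σ hσ
        simpa only [Gfun] using this
      · intro σ hσ
        have := hmax' σ hσ
        simpa only [Gfun] using this
    rw [heq]
  · have A := hmax τ' hmem'
    have B := hmax' τ hmem
    simp only [Gfun, lam1, lam2] at A B
    simp only [VD]
    set x : ℝ := S1 / (1 + τ.1 * S1) with hx
    set y : ℝ := S2 / (1 + τ.2 * S2) with hy
    set x' : ℝ := S1 / (1 + τ'.1 * S1) with hx'
    set y' : ℝ := S2 / (1 + τ'.2 * S2) with hy'
    have hD : 0 ≤ (γ' - γ) * (2 * aD1 * aD2 * ((x' - y') - (x - y))) := by nlinarith [A, B]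
    rcases hord with ⟨hg0, hgle⟩ | ⟨hgle, hg0⟩
    · have hlt : γ < γ' := lt_of_le_of_ne hgle hne
      have hΔ : 0 ≤ 2 * aD1 * aD2 * ((x' - y') - (x - y)) := by nlinarith [hD]
      have hγΔ : 0 ≤ γ * (2 * aD1 * aD2 * ((x' - y') - (x - y))) := mul_nonneg hg0 hΔ
      have hkey : 0 ≤ (2 * β - 1) * ((-(aD1 ^ 2) * x - aD2 ^ 2 * y)
          - (-(aD1 ^ 2) * x' - aD2 ^ 2 * y')) := by linarith [A, hγΔ]
      have hfin : (0:ℝ) ≤ (-(aD1 ^ 2) * x - aD2 ^ 2 * y)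
          - (-(aD1 ^ 2) * x' - aD2 ^ 2 * y') :=
        le_of_mul_le_mul_left (by rw [mul_zero]; exact hkey) hb
      linarith
    · have hlt : γ' < γ := lt_of_le_of_ne hgle (Ne.symm hne)
      have hΔ : 2 * aD1 * aD2 * ((x' - y') - (x - y)) ≤ 0 := by nlinarith [hD]
      have hγΔ : 0 ≤ γ * (2 * aD1 * aD2 * ((x' - y') - (x - y))) := by
        have := mul_nonneg (neg_nonneg.mpr hg0) (neg_nonneg.mpr hΔ)
        linarith [this]
      have hkey : 0 ≤ (2 * β - 1) * ((-(aD1 ^ 2) * x - aD2 ^ 2 * y)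
          - (-(aD1 ^ 2) * x' - aD2 ^ 2 * y')) := by linarith [A, hγΔ]
      have hfin : (0:ℝ) ≤ (-(aD1 ^ 2) * x - aD2 ^ 2 * y)
          - (-(aD1 ^ 2) * x' - aD2 ^ 2 * y') :=
        le_of_mul_le_mul_left (by rw [mul_zero]; exact hkey) hb
      linarith
end
end
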